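/- arXiv:1807.01819 — 2 statements merged into one kernel-verified Lean document; each statement's English description precedes it below -/
import Mathlib

section
/- Let F0^n, F0 and P^n, P be probability measures on R+ with P({0}) < 1, and suppose F0^n → F0 and P^n → P weakly. Define the renewal measures A^n = F0^n * Σ_{i≥0} (P^n)^{*(i)} and A = F0 * Σ_{i≥0} P^{*(i)}. Then for every q > 0 the Laplace transforms converge: Â^n(q) = F̂0^n(q)/(1 − P̂^n(q)) → F̂0(q)/(1 − P̂(q)) = Â(q); consequently the cumulative functions A^n([0,τ]) converge to A([0,τ]) at every continuity point τ of A([0,·]). -/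
open MeasureTheory Set Filter Topology

/-- Convolution of two measures on `ℝ`:
`(μ*ν)(E) = ∫∫ 1_E(x+y) μ(dx) ν(dy)`. -/
noncomputable def measConv (μ ν : MeasureTheory.Measure ℝ) : MeasureTheory.Measure ℝ :=
  MeasureTheory.Measure.map (fun z : ℝ × ℝ => z.1 + z.2) (μ.prod ν)

/-- Weak convergence of a sequence of measures: convergence of integrals of all
bounded continuous functions. -/
def WeakTendsto (μs : ℕ → MeasureTheory.Measure ℝ) (μ : MeasureTheory.Measure ℝ) : Prop :=
  ∀ f : BoundedContinuousFunction ℝ ℝ,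
    Filter.Tendsto (fun n => ∫ x, f x ∂(μs n)) Filter.atTop (nhds (∫ x, f x ∂μ))

/-- `i`-fold self-convolution `P^{*(i)}`, with `P^{*(0)} = δ₀`. -/
noncomputable def measIter (P : MeasureTheory.Measure ℝ) : ℕ → MeasureTheory.Measure ℝ
  | 0 => MeasureTheory.Measure.dirac 0
  | (i + 1) => measConv (measIter P i) P

/-- The renewal measure `A = F0 * Σ_{i≥0} P^{*(i)}`. -/
noncomputable def renewalMeasure (F0 P : MeasureTheory.Measure ℝ) : MeasureTheory.Measure ℝ :=
  measConv F0 (MeasureTheory.Measure.sum (fun i : ℕ => measIter P i))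

/-- The Laplace transform `μ̂(q) = ∫_0^∞ e^{-qx} μ(dx)` of a measure on `ℝ₊`. -/
noncomputable def mLaplace (μ : MeasureTheory.Measure ℝ) (q : ℝ) : ℝ :=
  ∫ x, Real.exp (-q * x) ∂μ

/-- Cumulative function `τ ↦ μ([0,τ])` of a measure on `ℝ₊`. -/
noncomputable def cumul (μ : MeasureTheory.Measure ℝ) (τ : ℝ) : ℝ :=
  (μ (Set.Icc 0 τ)).toReal

/-- Generalized inverse `f†(t) = inf{s ≥ 0 : f(s) > t}` of a nondecreasing
function `f : ℝ₊ → ℝ₊`. -/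
noncomputable def genInv (f : ℝ → ℝ) (t : ℝ) : ℝ :=
  sInf {s : ℝ | 0 ≤ s ∧ t < f s}


namespace Stmt11Aux

open Metric

open scoped ENNReal NNReal

lemma madd : Measurable (fun z : ℝ × ℝ => z.1 + z.2) := measurable_fst.add measurable_snd

lemma mexp (q : ℝ) : Measurable (fun x : ℝ => ENNReal.ofReal (Real.exp (-q * x))) :=
  (ENNReal.continuous_ofReal.comp
    (Real.continuous_exp.comp (continuous_const.mul continuous_id))).measurable

instance conv_prob (μ ν : Measure ℝ) [IsProbabilityMeasure μ] [IsProbabilityMeasure ν] :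
    IsProbabilityMeasure (measConv μ ν) :=
  Measure.isProbabilityMeasure_map madd.aemeasurable

lemma iter_prob (P : Measure ℝ) [IsProbabilityMeasure P] (i : ℕ) :
    IsProbabilityMeasure (measIter P i) := by
  induction i with
  | zero => exact Measure.dirac.isProbabilityMeasure
  | succ i ih => exact @conv_prob _ _ ih _

lemma conv_pos {μ ν : Measure ℝ} [SFinite ν] (hμ : μ (Set.Iio 0) = 0) (hν : ν (Set.Iio 0) = 0) :
    measConv μ ν (Set.Iio 0) = 0 := by
  rw [measConv, Measure.map_apply madd measurableSet_Iio]
  have hsub : (fun z : ℝ × ℝ => z.1 + z.2) ⁻¹' (Set.Iio 0) ⊆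
      (Set.Iio 0 ×ˢ Set.univ) ∪ (Set.univ ×ˢ Set.Iio 0) := by
    rintro ⟨x, y⟩ h
    simp only [Set.mem_preimage, Set.mem_Iio] at h
    rcases lt_or_ge x 0 with hx | hx
    · exact Or.inl ⟨Set.mem_Iio.mpr hx, trivial⟩
    · exact Or.inr ⟨trivial, Set.mem_Iio.mpr (by linarith)⟩
  refine le_antisymm ((measure_mono hsub).trans ?_) zero_le
  refine (measure_union_le _ _).trans ?_
  rw [Measure.prod_prod, Measure.prod_prod, hμ, hν]
  simp

lemma iter_pos {P : Measure ℝ} [SFinite P] (hP : P (Set.Iio 0) = 0) (i : ℕ) :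
    measIter P i (Set.Iio 0) = 0 := by
  induction i with
  | zero =>
    simp only [measIter, Measure.dirac_apply' _ measurableSet_Iio]
    simp
  | succ i ih => exact conv_pos ih hP

/-- The elementary Laplace transform as a lower integral. -/
noncomputable def Lq (μ : Measure ℝ) (q : ℝ) : ℝ≥0∞ :=
  ∫⁻ x, ENNReal.ofReal (Real.exp (-q * x)) ∂μ

lemma mLaplace_eq_toReal (μ : Measure ℝ) (q : ℝ) : mLaplace μ q = (Lq μ q).toReal := by
  rw [mLaplace, integral_eq_lintegral_of_nonneg_ae (Eventually.of_forall fun x => (Real.exp_pos _).le)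
    (Continuous.aestronglyMeasurable (by continuity))]
  rfl

lemma Lq_conv (μ ν : Measure ℝ) [SFinite μ] [SFinite ν] (q : ℝ) :
    Lq (measConv μ ν) q = Lq μ q * Lq ν q := by
  rw [Lq, measConv, lintegral_map (mexp q) madd]
  have : ∀ z : ℝ × ℝ, ENNReal.ofReal (Real.exp (-q * (z.1 + z.2)))
      = ENNReal.ofReal (Real.exp (-q * z.1)) * ENNReal.ofReal (Real.exp (-q * z.2)) := by
    intro z
    rw [← ENNReal.ofReal_mul (Real.exp_pos _).le, ← Real.exp_add]
    ring_nf
  simp_rw [this]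
  exact lintegral_prod_mul (mexp q).aemeasurable (mexp q).aemeasurable

lemma Lq_dirac (q : ℝ) : Lq (Measure.dirac (0:ℝ)) q = 1 := by
  rw [Lq, lintegral_dirac]
  simp

lemma Lq_iter (P : Measure ℝ) [IsProbabilityMeasure P] (q : ℝ) (i : ℕ) :
    Lq (measIter P i) q = (Lq P q) ^ i := by
  induction i with
  | zero => simpa [measIter] using Lq_dirac q
  | succ i ih =>
    haveI := iter_prob P i
    rw [measIter, Lq_conv, ih, pow_succ]

lemma Lq_sum (m : ℕ → Measure ℝ) (q : ℝ) : Lq (Measure.sum m) q = ∑' i, Lq (m i) q := by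
  rw [Lq, lintegral_sum_measure]; rfl

lemma Lq_le_one {μ : Measure ℝ} [IsProbabilityMeasure μ] (hμ : μ (Set.Iio 0) = 0) {q : ℝ}
    (hq : 0 ≤ q) : Lq μ q ≤ 1 := by
  have : Lq μ q ≤ ∫⁻ _, 1 ∂μ := by
    refine lintegral_mono_ae ?_
    have h0 : ∀ᵐ x ∂μ, 0 ≤ x := by
      rw [ae_iff]
      simp only [not_le]; exact hμ
    filter_upwards [h0] with x hx
    simp only [ENNReal.ofReal_le_one]
    exact Real.exp_le_one_iff.mpr (by nlinarith)
  simpa using this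

lemma Lq_pos {μ : Measure ℝ} [IsProbabilityMeasure μ] (q : ℝ) : 0 < Lq μ q := by
  rw [Lq, lintegral_pos_iff_support (mexp q)]
  have : (Function.support fun x => ENNReal.ofReal (Real.exp (-q * x))) = Set.univ := by
    ext x; simp [Function.mem_support, ENNReal.ofReal_eq_zero, not_le, Real.exp_pos]
  rw [this]
  simp [IsProbabilityMeasure.measure_univ]

lemma lintegral_exp_lt_one {P : Measure ℝ} [IsProbabilityMeasure P] (hpos : P (Set.Iio 0) = 0)
    (h0 : P {0} < 1) {q : ℝ} (hq : 0 < q) :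
    (∫⁻ x, ENNReal.ofReal (Real.exp (-q * x)) ∂P) < 1 := by
  -- rewrite integrand to capped version
  have hae : ∀ᵐ x ∂P, 0 ≤ x := by rw [ae_iff]; simp only [not_le]; exact hpos
  set g : ℝ → ℝ≥0∞ := fun x => ENNReal.ofReal (Real.exp (-q * max x 0)) with hg
  have hgm : Measurable g :=
    (ENNReal.continuous_ofReal.comp (Real.continuous_exp.comp
      (continuous_const.mul (continuous_id.max continuous_const)))).measurable
  have hcongr : (∫⁻ x, ENNReal.ofReal (Real.exp (-q * x)) ∂P) = ∫⁻ x, g x ∂P := by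
    refine lintegral_congr_ae ?_
    filter_upwards [hae] with x hx
    rw [hg]; simp [max_eq_left hx]
  rw [hcongr]
  -- find ε with P (Ici ε) > 0
  have hIoi : 0 < P (Set.Ioi 0) := by
    have hIic : P (Set.Iic 0) < 1 := by
      have : P (Set.Iic 0) ≤ P (Set.Iio 0) + P {0} := by
        have : Set.Iic (0:ℝ) ⊆ Set.Iio 0 ∪ {0} := by
          intro x hx
          rcases lt_or_eq_of_le (Set.mem_Iic.mp hx) with h | h
          · exact Or.inl h
          · exact Or.inr h
        exact (measure_mono this).trans (measure_union_le _ _)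
      rw [hpos, zero_add] at this
      exact lt_of_le_of_lt this h0
    by_contra hc
    push_neg at hc
    have hz : P (Set.Ioi 0) = 0 := le_antisymm hc zero_le
    have hsub : (Set.univ : Set ℝ) ⊆ Set.Iic 0 ∪ Set.Ioi 0 := by
      intro x _
      rcases le_or_gt x 0 with h|h
      · exact Or.inl (Set.mem_Iic.mpr h)
      · exact Or.inr (Set.mem_Ioi.mpr h)
    have : P Set.univ ≤ P (Set.Iic 0) + P (Set.Ioi 0) :=
      (measure_mono hsub).trans (measure_union_le _ _)
    rw [measure_univ, hz, add_zero] at this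
    exact absurd (lt_of_le_of_lt this hIic) (lt_irrefl _)
  obtain ⟨m, hm⟩ : ∃ m : ℕ, 0 < P (Set.Ici (((m:ℝ)+1)⁻¹)) := by
    by_contra hc
    push_neg at hc
    have hnull : ∀ m : ℕ, P (Set.Ici (((m:ℝ)+1)⁻¹)) = 0 :=
      fun m => le_antisymm (hc m) zero_le
    have hun : (Set.Ioi (0:ℝ)) = ⋃ m : ℕ, Set.Ici (((m:ℝ)+1)⁻¹) := by
      ext x
      simp only [Set.mem_Ioi, Set.mem_iUnion, Set.mem_Ici]
      constructor
      · intro hx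
        obtain ⟨m, hm⟩ := exists_nat_one_div_lt hx
        rw [one_div] at hm
        exact ⟨m, hm.le⟩
      · rintro ⟨m, hm⟩
        have : (0:ℝ) < ((m:ℝ)+1)⁻¹ := by positivity
        linarith
    rw [hun] at hIoi
    have hz2 : P (⋃ m : ℕ, Set.Ici (((m:ℝ)+1)⁻¹)) = 0 := by
      refine le_antisymm ((measure_iUnion_le _).trans ?_) zero_le
      rw [ENNReal.tsum_eq_zero.mpr hnull]
    rw [hz2] at hIoi
    exact lt_irrefl _ hIoi
  set ε : ℝ := ((m:ℝ)+1)⁻¹ with hε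
  have hεpos : 0 < ε := by positivity
  -- split the integral
  have hsplit : (∫⁻ x, g x ∂P)
      = (∫⁻ x in (Set.Ici ε)ᶜ, g x ∂P) + ∫⁻ x in Set.Ici ε, g x ∂P :=
    (lintegral_add_compl g measurableSet_Ici.compl).symm.trans (by rw [compl_compl])
  have hb1 : (∫⁻ x in (Set.Ici ε)ᶜ, g x ∂P) ≤ 1 * P ((Set.Ici ε)ᶜ) := by
    rw [one_mul, ← setLIntegral_one]
    refine setLIntegral_mono measurable_one fun x _ => ?_
    rw [hg]
    simp only [ENNReal.ofReal_le_one]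
    exact Real.exp_le_one_iff.mpr (by nlinarith [le_max_right x (0:ℝ)])
  have hb2 : (∫⁻ x in Set.Ici ε, g x ∂P)
      ≤ ENNReal.ofReal (Real.exp (-q * ε)) * P (Set.Ici ε) := by
    rw [← setLIntegral_const]
    refine setLIntegral_mono measurable_const fun x hx => ?_
    rw [hg]
    refine ENNReal.ofReal_le_ofReal (Real.exp_le_exp.mpr ?_)
    have hx' : ε ≤ x := hx
    nlinarith [le_max_left x (0:ℝ), le_max_right x (0:ℝ)]
  have hlt : ENNReal.ofReal (Real.exp (-q * ε)) * P (Set.Ici ε) < 1 * P (Set.Ici ε) := by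
    refine ENNReal.mul_lt_mul_left (by exact hm.ne') (measure_ne_top _ _) ?_
    rw [← ENNReal.ofReal_one]
    refine ENNReal.ofReal_lt_ofReal_iff_of_nonneg (Real.exp_pos _).le |>.mpr ?_
    rw [Real.exp_lt_one_iff]
    nlinarith
  calc (∫⁻ x, g x ∂P) ≤ 1 * P ((Set.Ici ε)ᶜ) + ENNReal.ofReal (Real.exp (-q * ε)) * P (Set.Ici ε) := by
        rw [hsplit]; exact add_le_add hb1 hb2
    _ < 1 * P ((Set.Ici ε)ᶜ) + 1 * P (Set.Ici ε) := by
        exact ENNReal.add_lt_add_left (by simp [measure_ne_top]) hlt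
    _ = 1 := by
        rw [one_mul, one_mul, add_comm, measure_add_measure_compl measurableSet_Ici, measure_univ]


lemma Lq_lt_one {P : Measure ℝ} [IsProbabilityMeasure P] (hpos : P (Set.Iio 0) = 0)
    (h0 : P {0} < 1) {q : ℝ} (hq : 0 < q) : Lq P q < 1 :=
  lintegral_exp_lt_one hpos h0 hq

lemma sfinite_iter (P : Measure ℝ) [IsProbabilityMeasure P] : ∀ i, SFinite (measIter P i) :=
  fun i => letI := iter_prob P i; inferInstance

lemma renewal_sum (F0 P : Measure ℝ) [IsProbabilityMeasure P] :
    renewalMeasure F0 P = Measure.sum (fun i => measConv F0 (measIter P i)) := by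
  haveI := sfinite_iter P
  rw [renewalMeasure, measConv, Measure.prod_sum_right, Measure.map_sum madd.aemeasurable]
  rfl

lemma Lq_renewal (F0 P : Measure ℝ) [IsProbabilityMeasure F0] [IsProbabilityMeasure P] (q : ℝ) :
    Lq (renewalMeasure F0 P) q = Lq F0 q * (1 - Lq P q)⁻¹ := by
  haveI := sfinite_iter P
  rw [renewalMeasure, Lq_conv, Lq_sum]
  simp_rw [Lq_iter]
  rw [ENNReal.tsum_geometric]

lemma laplace_renewal (F0 P : Measure ℝ) [IsProbabilityMeasure F0] [IsProbabilityMeasure P]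
    (hF0pos : F0 (Set.Iio 0) = 0) (hPpos : P (Set.Iio 0) = 0) {q : ℝ} (hq : 0 < q) :
    mLaplace (renewalMeasure F0 P) q = mLaplace F0 q / (1 - mLaplace P q) := by
  have hP1 : Lq P q ≤ 1 := Lq_le_one hPpos hq.le
  rw [mLaplace_eq_toReal, mLaplace_eq_toReal, mLaplace_eq_toReal, Lq_renewal]
  rcases lt_or_eq_of_le hP1 with hlt | heq
  · rw [ENNReal.toReal_mul, ENNReal.toReal_inv,
      ENNReal.toReal_sub_of_le hP1 ENNReal.one_ne_top, ENNReal.toReal_one, div_eq_mul_inv]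
  · rw [heq, tsub_self, ENNReal.inv_zero, ENNReal.toReal_one, sub_self, div_zero,
      ENNReal.mul_top (ne_of_gt (Lq_pos q)), ENNReal.toReal_top]

lemma lower_bound (μ : Measure ℝ) {q : ℝ} (hq : 0 ≤ q) (τ : ℝ) :
    ENNReal.ofReal (Real.exp (-q * τ)) * μ (Set.Icc 0 τ) ≤ Lq μ q := by
  calc ENNReal.ofReal (Real.exp (-q * τ)) * μ (Set.Icc 0 τ)
      = ∫⁻ _ in Set.Icc 0 τ, ENNReal.ofReal (Real.exp (-q * τ)) ∂μ := (setLIntegral_const _ _).symm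
    _ ≤ ∫⁻ x in Set.Icc 0 τ, ENNReal.ofReal (Real.exp (-q * x)) ∂μ := by
        refine setLIntegral_mono (mexp q) fun x hx => ?_
        refine ENNReal.ofReal_le_ofReal (Real.exp_le_exp.mpr ?_)
        nlinarith [hx.2]
    _ ≤ Lq μ q := setLIntegral_le_lintegral _ _

lemma Icc_le (μ : Measure ℝ) {q : ℝ} (hq : 0 ≤ q) (τ : ℝ) :
    μ (Set.Icc 0 τ) ≤ ENNReal.ofReal (Real.exp (q * τ)) * Lq μ q := by
  have hmul : Real.exp (q * τ) * Real.exp (-q * τ) = 1 := by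
    rw [← Real.exp_add]
    norm_num
  calc μ (Set.Icc 0 τ)
      = ENNReal.ofReal (Real.exp (q * τ)) * (ENNReal.ofReal (Real.exp (-q * τ)) * μ (Set.Icc 0 τ)) := by
        rw [← mul_assoc, ← ENNReal.ofReal_mul (Real.exp_pos _).le, hmul]
        simp
    _ ≤ ENNReal.ofReal (Real.exp (q * τ)) * Lq μ q := mul_le_mul_right (lower_bound μ hq τ) _

lemma Lq_renewal_lt_top (F0 P : Measure ℝ) [IsProbabilityMeasure F0] [IsProbabilityMeasure P]
    (hF0pos : F0 (Set.Iio 0) = 0) (hPpos : P (Set.Iio 0) = 0) (h0 : P {0} < 1) :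
    Lq (renewalMeasure F0 P) 1 < ∞ := by
  rw [Lq_renewal]
  refine ENNReal.mul_lt_top (lt_of_le_of_lt (Lq_le_one hF0pos zero_le_one) ENNReal.one_lt_top) ?_
  rw [ENNReal.inv_lt_top]
  rw [tsub_pos_iff_lt]
  exact Lq_lt_one hPpos h0 one_pos

lemma renewal_fin (F0 P : Measure ℝ) [IsProbabilityMeasure F0] [IsProbabilityMeasure P]
    (hF0pos : F0 (Set.Iio 0) = 0) (hPpos : P (Set.Iio 0) = 0) (h0 : P {0} < 1) (τ : ℝ) :
    renewalMeasure F0 P (Set.Icc 0 τ) < ∞ :=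
  lt_of_le_of_lt (Icc_le _ zero_le_one τ)
    (ENNReal.mul_lt_top ENNReal.ofReal_lt_top (Lq_renewal_lt_top F0 P hF0pos hPpos h0))



lemma thick_preimage_left (x : ℝ) (t : ℝ) (B : Set ℝ) :
    (fun y => x + y) ⁻¹' (Metric.thickening t B) = Metric.thickening t ((fun y => x + y) ⁻¹' B) := by
  have hiso : Isometry (fun y : ℝ => x + y) :=
    Isometry.of_dist_eq (fun a b => dist_add_left x a b)
  have hsurj : Function.Surjective (fun y : ℝ => x + y) := fun b => ⟨b - x, by ring⟩
  ext y
  rw [Set.mem_preimage, Metric.mem_thickening_iff_infEdist_lt, Metric.mem_thickening_iff_infEdist_lt]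
  have : Metric.infEDist ((fun y : ℝ => x + y) y) B = Metric.infEDist y ((fun y => x + y) ⁻¹' B) := by
    conv_lhs => rw [← Set.image_preimage_eq B hsurj]
    exact EMetric.infEdist_image hiso
  rw [← this]

lemma thick_preimage_right (y : ℝ) (t : ℝ) (B : Set ℝ) :
    (fun x => x + y) ⁻¹' (Metric.thickening t B) = Metric.thickening t ((fun x => x + y) ⁻¹' B) := by
  have hiso : Isometry (fun x : ℝ => x + y) :=
    Isometry.of_dist_eq (fun a b => dist_add_right a b y)
  have hsurj : Function.Surjective (fun x : ℝ => x + y) := fun b => ⟨b - y, by ring⟩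
  ext x
  rw [Set.mem_preimage, Metric.mem_thickening_iff_infEdist_lt, Metric.mem_thickening_iff_infEdist_lt]
  have : Metric.infEDist ((fun x : ℝ => x + y) x) B = Metric.infEDist x ((fun x => x + y) ⁻¹' B) := by
    conv_lhs => rw [← Set.image_preimage_eq B hsurj]
    exact EMetric.infEdist_image hiso
  rw [← this]

lemma conv_apply_left (κ lam : Measure ℝ) [SFinite κ] [SFinite lam] {C : Set ℝ}
    (hC : MeasurableSet C) :
    measConv κ lam C = ∫⁻ x, lam ((fun y => x + y) ⁻¹' C) ∂κ := by
  rw [measConv, Measure.map_apply madd hC, Measure.prod_apply (madd hC)]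
  rfl

lemma conv_apply_right (κ lam : Measure ℝ) [SFinite κ] [SFinite lam] {C : Set ℝ}
    (hC : MeasurableSet C) :
    measConv κ lam C = ∫⁻ y, κ ((fun x => x + y) ⁻¹' C) ∂lam := by
  rw [measConv, Measure.map_apply madd hC, Measure.prod_apply_symm (madd hC)]
  rfl

lemma conv_meas_le {μ μ' ν ν' : Measure ℝ} [IsProbabilityMeasure μ] [IsProbabilityMeasure μ']
    [IsProbabilityMeasure ν] [IsProbabilityMeasure ν'] {ε1 ε2 : ℝ≥0∞}
    (h1top : ε1 ≠ ∞) (h2top : ε2 ≠ ∞)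
    (h1 : levyProkhorovEDist μ μ' < ε1) (h2 : levyProkhorovEDist ν ν' < ε2)
    {B : Set ℝ} (hB : MeasurableSet B) :
    measConv μ ν B ≤ measConv μ' ν' (Metric.thickening (ε1 + ε2).toReal B) + ε1 + ε2 := by
  set C := Metric.thickening ε2.toReal B with hC
  have hCm : MeasurableSet C := Metric.isOpen_thickening.measurableSet
  have stepA : measConv μ ν B ≤ measConv μ ν' C + ε2 := by
    rw [conv_apply_left μ ν hB, conv_apply_left μ ν' hCm]
    calc ∫⁻ x, ν ((fun y => x + y) ⁻¹' B) ∂μ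
        ≤ ∫⁻ x, (ν' ((fun y => x + y) ⁻¹' C) + ε2) ∂μ := by
          refine lintegral_mono fun x => ?_
          have := left_measure_le_of_levyProkhorovEDist_lt h2
            (B := (fun y => x + y) ⁻¹' B) (hB.preimage (measurable_const.add measurable_id))
          rwa [← thick_preimage_left] at this
      _ = ∫⁻ x, ν' ((fun y => x + y) ⁻¹' C) ∂μ + ε2 * μ Set.univ := by
          rw [lintegral_add_right _ measurable_const, lintegral_const]
      _ = ∫⁻ x, ν' ((fun y => x + y) ⁻¹' C) ∂μ + ε2 := by rw [measure_univ, mul_one]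
  have stepB : measConv μ ν' C ≤ measConv μ' ν' (Metric.thickening ε1.toReal C) + ε1 := by
    have hTm : MeasurableSet (Metric.thickening ε1.toReal C) :=
      Metric.isOpen_thickening.measurableSet
    rw [conv_apply_right μ ν' hCm, conv_apply_right μ' ν' hTm]
    calc ∫⁻ y, μ ((fun x => x + y) ⁻¹' C) ∂ν'
        ≤ ∫⁻ y, (μ' ((fun x => x + y) ⁻¹' Metric.thickening ε1.toReal C) + ε1) ∂ν' := by
          refine lintegral_mono fun y => ?_
          have := left_measure_le_of_levyProkhorovEDist_lt h1
            (B := (fun x => x + y) ⁻¹' C) (hCm.preimage (measurable_id.add measurable_const))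
          rwa [← thick_preimage_right] at this
      _ = ∫⁻ y, μ' ((fun x => x + y) ⁻¹' Metric.thickening ε1.toReal C) ∂ν' + ε1 * ν' Set.univ := by
          rw [lintegral_add_right _ measurable_const, lintegral_const]
      _ = _ := by rw [measure_univ, mul_one]
  have hsub : Metric.thickening ε1.toReal C ⊆ Metric.thickening (ε1 + ε2).toReal B := by
    rw [hC, ENNReal.toReal_add h1top h2top]
    exact Metric.thickening_thickening_subset _ _ _
  calc measConv μ ν B ≤ measConv μ ν' C + ε2 := stepA
    _ ≤ (measConv μ' ν' (Metric.thickening ε1.toReal C) + ε1) + ε2 := add_le_add_left stepB _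
    _ ≤ (measConv μ' ν' (Metric.thickening (ε1 + ε2).toReal B) + ε1) + ε2 := by
        exact add_le_add_left (add_le_add_left (measure_mono hsub) _) _
    _ = measConv μ' ν' (Metric.thickening (ε1 + ε2).toReal B) + ε1 + ε2 := rfl

lemma lp_conv_le (μ μ' ν ν' : Measure ℝ) [IsProbabilityMeasure μ] [IsProbabilityMeasure μ']
    [IsProbabilityMeasure ν] [IsProbabilityMeasure ν'] :
    levyProkhorovEDist (measConv μ ν) (measConv μ' ν') ≤
      levyProkhorovEDist μ μ' + levyProkhorovEDist ν ν' := by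
  set d1 := levyProkhorovEDist μ μ' with hd1
  set d2 := levyProkhorovEDist ν ν' with hd2
  have hd1top : d1 ≠ ∞ := levyProkhorovEDist_ne_top _ _
  have hd2top : d2 ≠ ∞ := levyProkhorovEDist_ne_top _ _
  refine levyProkhorovEDist_le_of_forall _ _ _ (fun ε B hε hεtop hB => ?_)
  set γ := ε - (d1 + d2) with hγdef
  have hγ : γ ≠ 0 := by
    rw [hγdef]
    exact (tsub_pos_of_lt hε).ne'
  have hγle : γ ≤ ε := tsub_le_self
  have hγtop : γ ≠ ∞ := by
    intro h
    exact hεtop.ne (le_antisymm le_top (h ▸ hγle))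
  have hhalf : γ / 2 ≠ 0 := by
    simp only [ne_eq, ENNReal.div_eq_zero_iff]
    push_neg
    exact ⟨hγ, ENNReal.ofNat_ne_top⟩
  have hhalftop : γ / 2 ≠ ∞ := by
    refine fun h => hγtop ?_
    have := ENNReal.div_lt_top hγtop (by norm_num : (2:ℝ≥0∞) ≠ 0)
    exact absurd h this.ne
  set ε1 := d1 + γ / 2 with hε1def
  set ε2 := d2 + γ / 2 with hε2def
  have hε1top : ε1 ≠ ∞ := by
    simp [hε1def, ENNReal.add_eq_top, hd1top, hhalftop]
  have hε2top : ε2 ≠ ∞ := by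
    simp [hε2def, ENNReal.add_eq_top, hd2top, hhalftop]
  have h1 : d1 < ε1 := ENNReal.lt_add_right hd1top hhalf
  have h2 : d2 < ε2 := ENNReal.lt_add_right hd2top hhalf
  have hsum : ε1 + ε2 = ε := by
    rw [hε1def, hε2def]
    calc d1 + γ / 2 + (d2 + γ / 2) = (d1 + d2) + (γ / 2 + γ / 2) := by ring
      _ = (d1 + d2) + γ := by rw [ENNReal.add_halves]
      _ = ε := add_tsub_cancel_of_le hε.le
  constructor
  · have := conv_meas_le hε1top hε2top h1 h2 hB
    rwa [add_assoc, hsum] at this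
  · have h1' : levyProkhorovEDist μ' μ < ε1 := by rwa [levyProkhorovEDist_comm]
    have h2' : levyProkhorovEDist ν' ν < ε2 := by rwa [levyProkhorovEDist_comm]
    have := conv_meas_le hε1top hε2top h1' h2' hB
    rwa [add_assoc, hsum] at this





/-- convolution on `ProbabilityMeasure ℝ`. -/
noncomputable def pconv (μ ν : ProbabilityMeasure ℝ) : ProbabilityMeasure ℝ :=
  ⟨measConv μ.toMeasure ν.toMeasure, conv_prob _ _⟩

noncomputable def toProb (μ : Measure ℝ) (h : IsProbabilityMeasure μ) : ProbabilityMeasure ℝ :=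
  ⟨μ, h⟩

lemma prob_tendsto_of_weak {μn : ℕ → Measure ℝ} {μ : Measure ℝ}
    (hn : ∀ n, IsProbabilityMeasure (μn n)) (hμ : IsProbabilityMeasure μ)
    (hw : WeakTendsto μn μ) :
    Tendsto (fun n => toProb (μn n) (hn n)) atTop (𝓝 (toProb μ hμ)) := by
  refine (ProbabilityMeasure.tendsto_iff_forall_integral_tendsto
    (Ω := ℝ) (F := atTop) (μs := fun n => toProb (μn n) (hn n))
    (μ := toProb μ hμ)).mpr ?_
  exact fun f => hw f

lemma pconv_tendsto {μn νn : ℕ → ProbabilityMeasure ℝ} {μ ν : ProbabilityMeasure ℝ}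
    (hμ : Tendsto μn atTop (𝓝 μ)) (hν : Tendsto νn atTop (𝓝 ν)) :
    Tendsto (fun n => pconv (μn n) (νn n)) atTop (𝓝 (pconv μ ν)) := by
  set T := LevyProkhorov.probabilityMeasureHomeomorph (Ω := ℝ)
  have hμ' : Tendsto (fun n => T (μn n)) atTop (𝓝 (T μ)) := (T.continuous.tendsto μ).comp hμ
  have hν' : Tendsto (fun n => T (νn n)) atTop (𝓝 (T ν)) := (T.continuous.tendsto ν).comp hν
  have hdμ : Tendsto (fun n => dist (T (μn n)) (T μ)) atTop (𝓝 0) :=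
    tendsto_iff_dist_tendsto_zero.mp hμ'
  have hdν : Tendsto (fun n => dist (T (νn n)) (T ν)) atTop (𝓝 0) :=
    tendsto_iff_dist_tendsto_zero.mp hν'
  have key : ∀ n, dist (T (pconv (μn n) (νn n))) (T (pconv μ ν))
      ≤ dist (T (μn n)) (T μ) + dist (T (νn n)) (T ν) := by
    intro n
    rw [LevyProkhorov.dist_probabilityMeasure_def, LevyProkhorov.dist_probabilityMeasure_def, LevyProkhorov.dist_probabilityMeasure_def]
    have hble := lp_conv_le (μn n).toMeasure μ.toMeasure (νn n).toMeasure ν.toMeasure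
    have hfin : levyProkhorovEDist (μn n).toMeasure μ.toMeasure
        + levyProkhorovEDist (νn n).toMeasure ν.toMeasure ≠ ∞ :=
      ENNReal.add_ne_top.mpr ⟨levyProkhorovEDist_ne_top _ _, levyProkhorovEDist_ne_top _ _⟩
    have := ENNReal.toReal_mono hfin hble
    rwa [ENNReal.toReal_add (levyProkhorovEDist_ne_top _ _) (levyProkhorovEDist_ne_top _ _)] at this
  have hdconv : Tendsto (fun n => dist (T (pconv (μn n) (νn n))) (T (pconv μ ν))) atTop (𝓝 0) := by
    refine squeeze_zero (fun n => dist_nonneg) key ?_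
    simpa using hdμ.add hdν
  have : Tendsto (fun n => T (pconv (μn n) (νn n))) atTop (𝓝 (T (pconv μ ν))) :=
    tendsto_iff_dist_tendsto_zero.mpr hdconv
  have := (T.symm.continuous.tendsto _).comp this
  simpa [Function.comp_def] using this


noncomputable def pIter (Q : ProbabilityMeasure ℝ) : ℕ → ProbabilityMeasure ℝ
  | 0 => toProb (Measure.dirac 0) (by exact Measure.dirac.isProbabilityMeasure)
  | (i + 1) => pconv (pIter Q i) Q

lemma pIter_toMeasure (Q : ProbabilityMeasure ℝ) (i : ℕ) :
    (pIter Q i).toMeasure = measIter Q.toMeasure i := by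
  induction i with
  | zero => rfl
  | succ i ih =>
    show measConv (pIter Q i).toMeasure Q.toMeasure = measConv (measIter Q.toMeasure i) Q.toMeasure
    rw [ih]

lemma pIter_tendsto {Qn : ℕ → ProbabilityMeasure ℝ} {Q : ProbabilityMeasure ℝ}
    (h : Tendsto Qn atTop (𝓝 Q)) (i : ℕ) :
    Tendsto (fun n => pIter (Qn n) i) atTop (𝓝 (pIter Q i)) := by
  induction i with
  | zero => exact tendsto_const_nhds
  | succ i ih => exact pconv_tendsto ih h

lemma Iic_eq_Icc {μ : Measure ℝ} (hμ : μ (Set.Iio 0) = 0) {τ : ℝ} (hτ : 0 ≤ τ) :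
    μ (Set.Iic τ) = μ (Set.Icc 0 τ) := by
  refine le_antisymm ?_ (measure_mono Set.Icc_subset_Iic_self)
  have hsub : Set.Iic τ ⊆ Set.Icc 0 τ ∪ Set.Iio 0 := by
    intro x hx
    rcases le_or_gt 0 x with h | h
    · exact Or.inl ⟨h, hx⟩
    · exact Or.inr h
  calc μ (Set.Iic τ) ≤ μ (Set.Icc 0 τ) + μ (Set.Iio 0) :=
        (measure_mono hsub).trans (measure_union_le _ _)
    _ = μ (Set.Icc 0 τ) := by rw [hμ, add_zero]

lemma atom_zero {A : Measure ℝ} (hfin : ∀ σ : ℝ, A (Set.Icc 0 σ) < ∞) {τ : ℝ} (hτ : 0 ≤ τ)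
    (hc : ContinuousAt (cumul A) τ) : A {τ} = 0 := by
  set s : ℕ → ℝ := fun k => τ - ((k : ℝ) + 1)⁻¹ with hs_def
  have hs : Tendsto s atTop (𝓝 τ) := by
    have h1 : Tendsto (fun k : ℕ => ((k : ℝ) + 1)⁻¹) atTop (𝓝 0) := by
      have := tendsto_one_div_add_atTop_nhds_zero_nat (𝕜 := ℝ)
      simpa [one_div] using this
    have := tendsto_const_nhds (x := τ) (f := atTop (α := ℕ)) |>.sub h1
    simpa using this
  have hcs : Tendsto (fun k => cumul A (s k)) atTop (𝓝 (cumul A τ)) := hc.tendsto.comp hs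
  have hsing : A {τ} ≠ ∞ := by
    refine (lt_of_le_of_lt (measure_mono ?_) (hfin τ)).ne
    simp only [Set.singleton_subset_iff, Set.mem_Icc]
    exact ⟨hτ, le_refl τ⟩
  have hkey : ∀ k, cumul A (s k) + (A {τ}).toReal ≤ cumul A τ := by
    intro k
    have hsk : s k < τ := by
      rw [hs_def]
      have : (0:ℝ) < ((k : ℝ) + 1)⁻¹ := by positivity
      simp only
      linarith
    have hdisj : Disjoint (Set.Icc 0 (s k)) ({τ} : Set ℝ) := by
      rw [Set.disjoint_singleton_right]
      intro h
      exact absurd h.2 (not_le.mpr hsk)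
    have hU := measure_union (μ := A) hdisj (measurableSet_singleton τ)
    have hsub : Set.Icc 0 (s k) ∪ {τ} ⊆ Set.Icc 0 τ := by
      intro x hx
      rcases hx with hx | hx
      · exact ⟨hx.1, hx.2.trans hsk.le⟩
      · rw [Set.mem_singleton_iff] at hx
        exact ⟨hx ▸ hτ, hx ▸ le_refl τ⟩
    have hle : A (Set.Icc 0 (s k)) + A {τ} ≤ A (Set.Icc 0 τ) := hU ▸ measure_mono hsub
    have hfin1 : A (Set.Icc 0 (s k)) ≠ ∞ := (hfin _).ne
    calc cumul A (s k) + (A {τ}).toReal = (A (Set.Icc 0 (s k)) + A {τ}).toReal := by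
          rw [cumul, ENNReal.toReal_add hfin1 hsing]
      _ ≤ (A (Set.Icc 0 τ)).toReal := ENNReal.toReal_mono (hfin τ).ne hle
      _ = cumul A τ := rfl
  have hlim : cumul A τ + (A {τ}).toReal ≤ cumul A τ :=
    le_of_tendsto (hcs.add tendsto_const_nhds) (Eventually.of_forall hkey)
  have h0 : (A {τ}).toReal = 0 := le_antisymm (by linarith) ENNReal.toReal_nonneg
  rcases (ENNReal.toReal_eq_zero_iff _).mp h0 with h | h
  · exact h
  · exact absurd h hsing

noncomputable def expBCF (q : ℝ) (hq : 0 ≤ q) : BoundedContinuousFunction ℝ ℝ := by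
  refine BoundedContinuousFunction.mkOfBound
    ⟨fun x => Real.exp (-q * max x 0), by continuity⟩ 1 (fun x y => ?_)
  have hb : ∀ z : ℝ, 0 < Real.exp (-q * max z 0) ∧ Real.exp (-q * max z 0) ≤ 1 := by
    intro z
    refine ⟨Real.exp_pos _, Real.exp_le_one_iff.mpr ?_⟩
    nlinarith [le_max_right z (0:ℝ)]
  show |Real.exp (-q * max x 0) - Real.exp (-q * max y 0)| ≤ 1
  rw [abs_sub_le_iff]
  constructor <;> nlinarith [hb x, hb y]

lemma integral_expBCF {μ : Measure ℝ} (hμ : μ (Set.Iio 0) = 0) {q : ℝ} (hq : 0 ≤ q) :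
    ∫ x, (expBCF q hq) x ∂μ = mLaplace μ q := by
  rw [mLaplace]
  refine integral_congr_ae ?_
  have h0 : ∀ᵐ x ∂μ, 0 ≤ x := by
    rw [ae_iff]
    simp only [not_le]; exact hμ
  filter_upwards [h0] with x hx
  simp [expBCF, max_eq_left hx]

lemma mLaplace_tendsto {μn : ℕ → Measure ℝ} {μ : Measure ℝ}
    (hn : ∀ n, μn n (Set.Iio 0) = 0) (hμ : μ (Set.Iio 0) = 0)
    (hw : WeakTendsto μn μ) {q : ℝ} (hq : 0 ≤ q) :
    Tendsto (fun n => mLaplace (μn n) q) atTop (𝓝 (mLaplace μ q)) := by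
  have h := hw (expBCF q hq)
  rw [integral_expBCF hμ hq] at h
  exact h.congr fun n => integral_expBCF (hn n) hq

lemma mLaplace_lt_one {P : Measure ℝ} [IsProbabilityMeasure P] (hpos : P (Set.Iio 0) = 0)
    (h0 : P {0} < 1) {q : ℝ} (hq : 0 < q) : mLaplace P q < 1 := by
  rw [mLaplace_eq_toReal]
  have h1 := Lq_lt_one hpos h0 hq
  have hne : Lq P q ≠ ∞ := (lt_of_lt_of_le h1 le_top).ne
  calc (Lq P q).toReal < (1 : ℝ≥0∞).toReal :=
        (ENNReal.toReal_lt_toReal hne ENNReal.one_ne_top).mpr h1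
    _ = 1 := ENNReal.toReal_one

lemma summand_atom {F0 P : Measure ℝ} [IsProbabilityMeasure F0] [IsProbabilityMeasure P]
    {τ : ℝ} (hA : renewalMeasure F0 P {τ} = 0) (i : ℕ) :
    measConv F0 (measIter P i) {τ} = 0 := by
  rw [renewal_sum, Measure.sum_apply _ (measurableSet_singleton τ)] at hA
  exact ENNReal.tsum_eq_zero.mp hA i

lemma cumul_eq_tsum (F0 P : Measure ℝ) [IsProbabilityMeasure F0] [IsProbabilityMeasure P]
    (hF0pos : F0 (Set.Iio 0) = 0) (hPpos : P (Set.Iio 0) = 0) {τ : ℝ} (hτ : 0 ≤ τ) :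
    cumul (renewalMeasure F0 P) τ = ∑' i, ((measConv F0 (measIter P i)) (Set.Iic τ)).toReal := by
  haveI := sfinite_iter P
  rw [cumul, renewal_sum, Measure.sum_apply _ measurableSet_Icc]
  rw [ENNReal.tsum_toReal_eq (fun i => by
    haveI := iter_prob P i
    exact measure_ne_top _ _)]
  refine tsum_congr fun i => ?_
  haveI := iter_prob P i
  rw [Iic_eq_Icc (conv_pos hF0pos (iter_pos hPpos i)) hτ]

lemma summand_tail_bound (F0 P : Measure ℝ) [IsProbabilityMeasure F0] [IsProbabilityMeasure P]
    (hF0pos : F0 (Set.Iio 0) = 0) (hPpos : P (Set.Iio 0) = 0) {τ : ℝ} (hτ : 0 ≤ τ) (i : ℕ) :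
    (measConv F0 (measIter P i)) (Set.Iic τ)
      ≤ ENNReal.ofReal (Real.exp τ) * (Lq P 1) ^ i := by
  haveI := iter_prob P i
  haveI := sfinite_iter P
  rw [Iic_eq_Icc (conv_pos hF0pos (iter_pos hPpos i)) hτ]
  refine (Icc_le _ zero_le_one τ).trans ?_
  rw [Lq_conv, Lq_iter, one_mul]
  calc ENNReal.ofReal (Real.exp τ) * (Lq F0 1 * Lq P 1 ^ i)
      ≤ ENNReal.ofReal (Real.exp τ) * (1 * Lq P 1 ^ i) := by
        exact mul_le_mul_right (mul_le_mul_left (Lq_le_one hF0pos zero_le_one) _) _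
    _ = ENNReal.ofReal (Real.exp τ) * Lq P 1 ^ i := by rw [one_mul]

end Stmt11Aux

open scoped ENNReal NNReal in
open Stmt11Aux in
/-- If `F0^n → F0` and `P^n → P` weakly (probability measures
on `ℝ₊`, `P({0}) < 1`), then the Laplace transforms of the renewal measures
satisfy `Â^n(q) = F̂0^n(q)/(1 − P̂^n(q)) → F̂0(q)/(1 − P̂(q)) = Â(q)` for every
`q > 0`; consequently `A^n([0,τ]) → A([0,τ])` at every continuity point `τ` of
`A([0,·])`. -/
theorem stmt11 (F0n Pn : ℕ → MeasureTheory.Measure ℝ) (F0 P : MeasureTheory.Measure ℝ)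
    (hF0n : ∀ n, MeasureTheory.IsProbabilityMeasure (F0n n))
    (hPn : ∀ n, MeasureTheory.IsProbabilityMeasure (Pn n))
    (hF0 : MeasureTheory.IsProbabilityMeasure F0)
    (hP : MeasureTheory.IsProbabilityMeasure P)
    (hF0n_pos : ∀ n, F0n n (Set.Iio 0) = 0) (hPn_pos : ∀ n, Pn n (Set.Iio 0) = 0)
    (hF0_pos : F0 (Set.Iio 0) = 0) (hP_pos : P (Set.Iio 0) = 0)
    (hP0 : P {0} < 1)
    (hF0conv : WeakTendsto F0n F0) (hPconv : WeakTendsto Pn P) :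
    (∀ q : ℝ, 0 < q →
      (∀ n, mLaplace (renewalMeasure (F0n n) (Pn n)) q
          = mLaplace (F0n n) q / (1 - mLaplace (Pn n) q)) ∧
      mLaplace (renewalMeasure F0 P) q = mLaplace F0 q / (1 - mLaplace P q) ∧
      Filter.Tendsto (fun n => mLaplace (renewalMeasure (F0n n) (Pn n)) q)
        Filter.atTop (nhds (mLaplace (renewalMeasure F0 P) q))) ∧
    (∀ τ : ℝ, 0 ≤ τ → ContinuousAt (cumul (renewalMeasure F0 P)) τ →
      Filter.Tendsto (fun n => cumul (renewalMeasure (F0n n) (Pn n)) τ)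
        Filter.atTop (nhds (cumul (renewalMeasure F0 P) τ))) := by
  haveI := hF0
  haveI := hP
  have hPlap1 : mLaplace P 1 < 1 := mLaplace_lt_one hP_pos hP0 one_pos
  constructor
  · intro q hq
    refine ⟨fun n => ?_, ?_, ?_⟩
    · haveI := hF0n n; haveI := hPn n
      exact laplace_renewal _ _ (hF0n_pos n) (hPn_pos n) hq
    · exact laplace_renewal _ _ hF0_pos hP_pos hq
    · have hF : Tendsto (fun n => mLaplace (F0n n) q) atTop (𝓝 (mLaplace F0 q)) :=
        mLaplace_tendsto hF0n_pos hF0_pos hF0conv hq.le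
      have hPt : Tendsto (fun n => mLaplace (Pn n) q) atTop (𝓝 (mLaplace P q)) :=
        mLaplace_tendsto hPn_pos hP_pos hPconv hq.le
      have hlt : mLaplace P q < 1 := mLaplace_lt_one hP_pos hP0 hq
      have hden : (1 : ℝ) - mLaplace P q ≠ 0 := by
        intro h
        have : mLaplace P q = 1 := by linarith
        linarith
      have hdiv : Tendsto (fun n => mLaplace (F0n n) q / (1 - mLaplace (Pn n) q)) atTop
          (𝓝 (mLaplace F0 q / (1 - mLaplace P q))) :=
        hF.div (tendsto_const_nhds.sub hPt) hden
      have heqn : ∀ n, mLaplace (F0n n) q / (1 - mLaplace (Pn n) q)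
          = mLaplace (renewalMeasure (F0n n) (Pn n)) q := fun n => by
        haveI := hF0n n; haveI := hPn n
        exact (laplace_renewal _ _ (hF0n_pos n) (hPn_pos n) hq).symm
      rw [laplace_renewal _ _ hF0_pos hP_pos hq]
      exact hdiv.congr heqn
  · intro τ hτ hc
    have hfin : ∀ σ : ℝ, renewalMeasure F0 P (Set.Icc 0 σ) < ∞ :=
      fun σ => renewal_fin F0 P hF0_pos hP_pos hP0 σ
    have hatom : renewalMeasure F0 P {τ} = 0 := atom_zero hfin hτ hc
    set F : ProbabilityMeasure ℝ := toProb F0 hF0 with hF_def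
    set Pr : ProbabilityMeasure ℝ := toProb P hP with hPr_def
    have hFt : Tendsto (fun n => toProb (F0n n) (hF0n n)) atTop (𝓝 F) :=
      prob_tendsto_of_weak hF0n hF0 hF0conv
    have hPt : Tendsto (fun n => toProb (Pn n) (hPn n)) atTop (𝓝 Pr) :=
      prob_tendsto_of_weak hPn hP hPconv
    have hAi : ∀ i, Tendsto
        (fun n => pconv (toProb (F0n n) (hF0n n)) (pIter (toProb (Pn n) (hPn n)) i))
        atTop (𝓝 (pconv F (pIter Pr i))) :=
      fun i => pconv_tendsto hFt (pIter_tendsto hPt i)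
    have htoMeas : ∀ i, (pconv F (pIter Pr i)).toMeasure = measConv F0 (measIter P i) := by
      intro i
      show measConv F.toMeasure (pIter Pr i).toMeasure = _
      rw [pIter_toMeasure]
      rfl
    have htoMeasn : ∀ n i,
        (pconv (toProb (F0n n) (hF0n n)) (pIter (toProb (Pn n) (hPn n)) i)).toMeasure
        = measConv (F0n n) (measIter (Pn n) i) := by
      intro n i
      show measConv (F0n n) (pIter (toProb (Pn n) (hPn n)) i).toMeasure = _
      rw [pIter_toMeasure]
      rfl
    have hport : ∀ i, Tendsto (fun n => (measConv (F0n n) (measIter (Pn n) i)) (Set.Iic τ)) atTop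
        (𝓝 ((measConv F0 (measIter P i)) (Set.Iic τ))) := by
      intro i
      have hnull : (pconv F (pIter Pr i)).toMeasure (frontier (Set.Iic τ)) = 0 := by
        rw [frontier_Iic, htoMeas i]
        exact summand_atom hatom i
      have hconv := ProbabilityMeasure.tendsto_measure_of_null_frontier_of_tendsto' (hAi i) hnull
      rw [htoMeas i] at hconv
      refine hconv.congr fun n => ?_
      rw [htoMeasn n i]
    have hg : ∀ i, Tendsto (fun n => ((measConv (F0n n) (measIter (Pn n) i)) (Set.Iic τ)).toReal)
        atTop (𝓝 (((measConv F0 (measIter P i)) (Set.Iic τ)).toReal)) := by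
      intro i
      haveI := iter_prob P i
      exact (ENNReal.tendsto_toReal (measure_ne_top _ _)).comp (hport i)
    set r : ℝ := (mLaplace P 1 + 1) / 2 with hr_def
    have h0r : 0 ≤ mLaplace P 1 := by
      rw [mLaplace_eq_toReal]; exact ENNReal.toReal_nonneg
    have hr1 : r < 1 := by rw [hr_def]; linarith
    have hr0 : 0 ≤ r := by rw [hr_def]; linarith
    have hPlapt : Tendsto (fun n => mLaplace (Pn n) 1) atTop (𝓝 (mLaplace P 1)) :=
      mLaplace_tendsto hPn_pos hP_pos hPconv zero_le_one
    have hev : ∀ᶠ n in atTop, mLaplace (Pn n) 1 ≤ r := by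
      refine hPlapt.eventually (eventually_le_nhds ?_)
      rw [hr_def]; linarith
    have hbound : ∀ᶠ n in atTop, ∀ i : ℕ,
        ‖((measConv (F0n n) (measIter (Pn n) i)) (Set.Iic τ)).toReal‖ ≤ Real.exp τ * r ^ i := by
      filter_upwards [hev] with n hn
      intro i
      haveI := hF0n n; haveI := hPn n
      rw [Real.norm_eq_abs, abs_of_nonneg ENNReal.toReal_nonneg]
      have hb := summand_tail_bound (F0n n) (Pn n) (hF0n_pos n) (hPn_pos n) hτ i
      have hLq : Lq (Pn n) 1 = ENNReal.ofReal (mLaplace (Pn n) 1) := by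
        rw [mLaplace_eq_toReal, ENNReal.ofReal_toReal]
        exact (lt_of_le_of_lt (Lq_le_one (hPn_pos n) zero_le_one) ENNReal.one_lt_top).ne
      have hle2 : ENNReal.ofReal (Real.exp τ) * Lq (Pn n) 1 ^ i
          ≤ ENNReal.ofReal (Real.exp τ * r ^ i) := by
        rw [hLq, ENNReal.ofReal_mul (Real.exp_pos τ).le, ENNReal.ofReal_pow hr0]
        exact mul_le_mul_right (pow_le_pow_left' (ENNReal.ofReal_le_ofReal hn) i) _
      exact ENNReal.toReal_le_of_le_ofReal (by positivity) (hb.trans hle2)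
    have hsum : Summable (fun i : ℕ => Real.exp τ * r ^ i) :=
      (summable_geometric_of_lt_one hr0 hr1).mul_left _
    have hmain := tendsto_tsum_of_dominated_convergence hsum hg hbound
    have heqn : ∀ n, (∑' i, ((measConv (F0n n) (measIter (Pn n) i)) (Set.Iic τ)).toReal)
        = cumul (renewalMeasure (F0n n) (Pn n)) τ := fun n => by
      haveI := hF0n n; haveI := hPn n
      exact (cumul_eq_tsum (F0n n) (Pn n) (hF0n_pos n) (hPn_pos n) hτ).symm
    rw [cumul_eq_tsum F0 P hF0_pos hP_pos hτ]
    exact hmain.congr heqn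
end

section
/- Let P and F0 be probability measures on R+ with P({0}) < 1, let A = F0 * Σ_{i≥0} P^{*(i)} be the renewal measure with cumulative function A(τ) = A([0,τ]), and let τ(t) = A†(t) be its generalized inverse. Assume A(·) is strictly increasing on [0,∞) (so that τ(·) is continuous). Let F_t denote the renewal-scaled solution, i.e. the probability measure on R+ with Laplace transform F̂_t(q) = (1 − P̂(q)) ∫_t^∞ e^{-q(τ(s) − τ(t))} ds for q > 0. Then for t > 0 the map t ↦ F_t is continuous into the space of probability measures on R+ equipped with the topology of weak convergence. -/
open MeasureTheory Set Filter Topology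

section GenInv
variable {f : ℝ → ℝ}

lemma genInv_set_nonempty (hub : Tendsto f atTop atTop) (t : ℝ) :
    {s : ℝ | 0 ≤ s ∧ t < f s}.Nonempty := by
  obtain ⟨s, hs⟩ := (hub.eventually (eventually_gt_atTop t)).exists_forall_of_atTop
  exact ⟨max s 0, le_max_right _ _, hs _ (le_max_left _ _)⟩

lemma genInv_nonneg (hub : Tendsto f atTop atTop) (t : ℝ) : 0 ≤ genInv f t :=
  le_csInf (genInv_set_nonempty hub t) (fun s hs => hs.1)

lemma genInv_le (t s : ℝ) (h0 : 0 ≤ s) (h : t < f s) : genInv f t ≤ s :=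
  csInf_le ⟨0, fun x hx => hx.1⟩ ⟨h0, h⟩

lemma le_genInv_of (hub : Tendsto f atTop atTop) (t : ℝ) {b : ℝ}
    (h : ∀ s, 0 ≤ s → t < f s → b ≤ s) : b ≤ genInv f t :=
  le_csInf (genInv_set_nonempty hub t) (fun s hs => h s hs.1 hs.2)

lemma genInv_mono (hub : Tendsto f atTop atTop) : Monotone (genInv f) := by
  intro t t' h
  exact csInf_le_csInf ⟨0, fun x hx => hx.1⟩ (genInv_set_nonempty hub t')
    (fun s hs => ⟨hs.1, lt_of_le_of_lt h hs.2⟩)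

lemma genInv_continuous (hM : Monotone f) (hub : Tendsto f atTop atTop)
    (hsm : StrictMonoOn f (Ici 0)) : Continuous (genInv f) := by
  rw [Metric.continuous_iff]
  intro t₀ ε hε
  have h1 : genInv f t₀ < genInv f t₀ + ε/2 := by linarith
  obtain ⟨s', hs'mem, hs'lt⟩ := exists_lt_of_csInf_lt (genInv_set_nonempty hub t₀) h1
  set δ₁ : ℝ := f s' - t₀ with hδ₁
  have hδ₁pos : 0 < δ₁ := by simp only [hδ₁]; linarith [hs'mem.2]
  have hR : ∀ t, t < t₀ + δ₁ → genInv f t < genInv f t₀ + ε/2 := by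
    intro t ht
    have : genInv f t ≤ s' := genInv_le t s' hs'mem.1 (by simp only [hδ₁] at ht; linarith)
    linarith
  have hL : ∃ δ₂ > 0, ∀ t, t₀ - δ₂ < t → genInv f t₀ - ε < genInv f t := by
    by_cases hcase : genInv f t₀ - ε < 0
    · exact ⟨1, one_pos, fun t _ => lt_of_lt_of_le hcase (genInv_nonneg hub t)⟩
    · push_neg at hcase
      set s₁ : ℝ := genInv f t₀ - ε/2 with hs₁
      set s₂ : ℝ := genInv f t₀ - ε/4 with hs₂
      have hs₁0 : 0 ≤ s₁ := by simp only [hs₁]; linarith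
      have hs₂0 : 0 ≤ s₂ := by simp only [hs₂]; linarith
      have hf2 : f s₂ ≤ t₀ := by
        by_contra hcon
        push_neg at hcon
        have := genInv_le t₀ s₂ hs₂0 hcon
        simp only [hs₂] at this; linarith
      have hf1 : f s₁ < f s₂ := hsm hs₁0 hs₂0 (by simp only [hs₁, hs₂]; linarith)
      refine ⟨t₀ - f s₁, by linarith, ?_⟩
      intro t ht
      have htgt : f s₁ < t := by linarith
      have : s₁ ≤ genInv f t := by
        apply le_genInv_of hub
        intro s hs0 hlt
        by_contra hcon
        push_neg at hcon
        have := hM hcon.le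
        linarith
      simp only [hs₁] at this; linarith
  obtain ⟨δ₂, hδ₂pos, hL⟩ := hL
  refine ⟨min δ₁ δ₂, lt_min hδ₁pos hδ₂pos, ?_⟩
  intro t ht
  rw [Real.dist_eq] at ht ⊢
  rw [abs_sub_lt_iff] at ht ⊢
  constructor
  · have := hR t (by linarith [ht.1, min_le_left δ₁ δ₂])
    linarith
  · have := hL t (by linarith [ht.2, min_le_right δ₁ δ₂])
    linarith

end GenInv









lemma measurable_add2 : Measurable (fun z : ℝ × ℝ => z.1 + z.2) :=
  measurable_fst.add measurable_snd

lemma measConv_prob (μ ν : Measure ℝ) [IsProbabilityMeasure μ] [IsProbabilityMeasure ν] :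
    IsProbabilityMeasure (measConv μ ν) :=
  Measure.isProbabilityMeasure_map measurable_add2.aemeasurable

lemma measIter_prob (P : Measure ℝ) [IsProbabilityMeasure P] (i : ℕ) :
    IsProbabilityMeasure (measIter P i) := by
  induction i with
  | zero => exact Measure.dirac.isProbabilityMeasure
  | succ n ih => exact @measConv_prob _ _ ih _

lemma measConv_neg (μ ν : Measure ℝ) [SFinite ν] (hμ : μ (Iio 0) = 0) (hν : ν (Iio 0) = 0) :
    measConv μ ν (Iio 0) = 0 := by
  rw [measConv, Measure.map_apply measurable_add2 measurableSet_Iio]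
  have hsub : (fun z : ℝ × ℝ => z.1 + z.2) ⁻¹' (Iio 0) ⊆ (Iio 0 ×ˢ univ) ∪ (univ ×ˢ Iio 0) := by
    rintro ⟨x, y⟩ h
    simp only [mem_preimage, mem_Iio] at h
    by_cases hx : x < 0
    · exact Or.inl ⟨hx, trivial⟩
    · refine Or.inr ⟨trivial, ?_⟩
      push_neg at hx
      simp only [mem_Iio]
      linarith
  refine le_antisymm (le_trans (measure_mono hsub) ?_) zero_le
  refine le_trans (measure_union_le _ _) ?_
  rw [Measure.prod_prod, Measure.prod_prod, hμ, hν]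
  simp

lemma measIter_neg (P : Measure ℝ) [IsProbabilityMeasure P] (hP : P (Iio 0) = 0) (i : ℕ) :
    measIter P i (Iio 0) = 0 := by
  induction i with
  | zero => simp [measIter]
  | succ n ih => exact measConv_neg _ _ ih hP

section Renewal
variable (F0 P : Measure ℝ) [IsProbabilityMeasure F0] [IsProbabilityMeasure P]

lemma renewal_sfinite : SFinite (Measure.sum (fun i : ℕ => measIter P i)) := by
  have := measIter_prob P
  infer_instance

lemma renewal_neg (hF0 : F0 (Iio 0) = 0) (hP : P (Iio 0) = 0) :
    renewalMeasure F0 P (Iio 0) = 0 := by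
  have := measIter_prob P
  have := renewal_sfinite P
  refine measConv_neg _ _ hF0 ?_
  rw [Measure.sum_apply _ measurableSet_Iio]
  simp [measIter_neg P hP]

lemma renewal_univ : renewalMeasure F0 P univ = ⊤ := by
  have := measIter_prob P
  have := renewal_sfinite P
  rw [renewalMeasure, measConv, Measure.map_apply measurable_add2 MeasurableSet.univ]
  rw [Set.preimage_univ, ← Set.univ_prod_univ, Measure.prod_prod]
  rw [Measure.sum_apply _ MeasurableSet.univ]
  simp [measure_univ, ENNReal.tsum_const_eq_top_of_ne_zero]

end Renewal

section Cumul
variable (F0 P : Measure ℝ) [IsProbabilityMeasure F0] [IsProbabilityMeasure P]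
  (hF0 : F0 (Iio 0) = 0) (hP : P (Iio 0) = 0)
  (hA : StrictMonoOn (cumul (renewalMeasure F0 P)) (Set.Ici 0))

include hA in
lemma renewal_fin : ∀ r : ℝ, renewalMeasure F0 P (Icc 0 r) ≠ ⊤ := by
  intro r
  rcases lt_or_ge r 0 with h | h
  · rw [Set.Icc_eq_empty (by linarith)]
    simp
  · intro htop
    have h2 : renewalMeasure F0 P (Icc 0 (r+1)) = ⊤ :=
      top_le_iff.mp (htop ▸ measure_mono (Icc_subset_Icc le_rfl (by linarith)))
    have := hA (mem_Ici.mpr h) (mem_Ici.mpr (by linarith : (0:ℝ) ≤ r + 1)) (by linarith)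
    rw [cumul, cumul, htop, h2] at this
    simp at this

include hA in
lemma cumul_mono : Monotone (cumul (renewalMeasure F0 P)) := by
  intro r r' h
  exact ENNReal.toReal_mono (renewal_fin F0 P hA r') (measure_mono (Icc_subset_Icc le_rfl h))

include hF0 hP hA in
lemma cumul_tendsto : Tendsto (cumul (renewalMeasure F0 P)) atTop atTop := by
  apply tendsto_atTop_atTop_of_monotone (cumul_mono F0 P hA)
  intro M
  have hIci : renewalMeasure F0 P (Ici 0) = ⊤ := by
    have h1 := renewal_univ F0 P
    have h2 : renewalMeasure F0 P univ ≤ renewalMeasure F0 P (Iio 0) + renewalMeasure F0 P (Ici 0) := by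
      rw [← Iio_union_Ici (a := (0:ℝ))]
      exact measure_union_le _ _
    rw [h1, renewal_neg F0 P hF0 hP, zero_add] at h2
    exact top_le_iff.mp h2
  have hU : (⋃ n : ℕ, Icc (0:ℝ) n) = Ici 0 := by
    ext x
    simp only [mem_iUnion, mem_Icc, mem_Ici]
    constructor
    · rintro ⟨n, h1, _⟩; exact h1
    · intro hx
      obtain ⟨n, hn⟩ := exists_nat_ge x
      exact ⟨n, hx, hn⟩
  have hmono : Monotone (fun n : ℕ => Icc (0:ℝ) n) := by
    intro a b hab
    exact Icc_subset_Icc le_rfl (by exact_mod_cast hab)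
  have htendsto : Tendsto (fun n : ℕ => renewalMeasure F0 P (Icc 0 n)) atTop (𝓝 ⊤) := by
    have := tendsto_measure_iUnion_atTop (μ := renewalMeasure F0 P) hmono
    rwa [hU, hIci] at this
  have hev : ∀ᶠ n : ℕ in atTop, ENNReal.ofReal (max M 0) < renewalMeasure F0 P (Icc 0 n) :=
    htendsto.eventually_const_lt (ENNReal.ofReal_lt_top)
  obtain ⟨n, hn⟩ := hev.exists
  refine ⟨n, ?_⟩
  have hfin := renewal_fin F0 P hA (n : ℝ)
  have : max M 0 < cumul (renewalMeasure F0 P) n := by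
    rw [cumul]
    rw [← ENNReal.ofReal_lt_iff_lt_toReal (le_max_right M 0) hfin]
    exact hn
  exact le_of_lt (lt_of_le_of_lt (le_max_left M 0) this)

end Cumul



lemma ae_nonneg_of_Iio (μ : Measure ℝ) (hneg : μ (Iio 0) = 0) : ∀ᵐ x ∂μ, 0 ≤ x := by
  rw [ae_iff]
  convert hneg using 2
  ext x
  simp [not_le]

lemma exp_integrable (μ : Measure ℝ) [IsFiniteMeasure μ] (hneg : μ (Iio 0) = 0) {q : ℝ}
    (hq : 0 ≤ q) : Integrable (fun x => Real.exp (-q * x)) μ := by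
  refine Integrable.mono' (integrable_const 1) ?_ ?_
  · exact (Real.continuous_exp.comp (continuous_const.mul continuous_id)).aestronglyMeasurable
  · filter_upwards [ae_nonneg_of_Iio μ hneg] with x hx
    rw [Real.norm_eq_abs, abs_of_pos (Real.exp_pos _)]
    exact Real.exp_le_one_iff.mpr (by nlinarith)

lemma exp_integral_pos (μ : Measure ℝ) [IsProbabilityMeasure μ] (hneg : μ (Iio 0) = 0) {q : ℝ}
    (hq : 0 ≤ q) : 0 < ∫ x, Real.exp (-q * x) ∂μ := by
  rw [integral_pos_iff_support_of_nonneg (fun x => (Real.exp_pos _).le)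
    (exp_integrable μ hneg hq)]
  have : Function.support (fun x => Real.exp (-q * x)) = univ := by
    ext x; simp [Real.exp_ne_zero]
  rw [this]
  simp

lemma one_sub_laplace_pos (P : Measure ℝ) [IsProbabilityMeasure P] (hP_pos : P (Iio 0) = 0)
    (hP0 : P {0} < 1) {q : ℝ} (hq : 0 < q) : 0 < 1 - mLaplace P q := by
  have hIoi : 0 < P (Ioi 0) := by
    by_contra hcon
    push_neg at hcon
    have h0 : P (Ioi 0) = 0 := le_antisymm hcon zero_le
    have hle : P univ ≤ P (Iio 0) + (P {0} + P (Ioi 0)) := by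
      have : (univ : Set ℝ) = Iio 0 ∪ ({0} ∪ Ioi 0) := by
        ext x
        simp only [mem_univ, mem_union, mem_Iio, mem_singleton_iff, mem_Ioi, true_iff]
        rcases lt_trichotomy x 0 with h|h|h
        exacts [Or.inl h, Or.inr (Or.inl h), Or.inr (Or.inr h)]
      rw [this]
      exact le_trans (measure_union_le _ _) (by gcongr; exact measure_union_le _ _)
    rw [hP_pos, h0, zero_add, add_zero, measure_univ] at hle
    exact absurd (le_antisymm hle hP0.le).symm hP0.ne
  have hint : Integrable (fun x => 1 - Real.exp (-q * x)) P :=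
    (integrable_const 1).sub (exp_integrable P hP_pos hq.le)
  have hpos : 0 < ∫ x, (1 - Real.exp (-q * x)) ∂P := by
    rw [integral_pos_iff_support_of_nonneg_ae ?_ hint]
    · refine lt_of_lt_of_le hIoi (measure_mono ?_)
      intro x hx
      simp only [Function.mem_support]
      have : Real.exp (-q * x) < 1 := by
        rw [Real.exp_lt_one_iff]
        simp only [mem_Ioi] at hx
        nlinarith
      intro hcon
      rw [sub_eq_zero] at hcon
      linarith
    · filter_upwards [ae_nonneg_of_Iio P hP_pos] with x hx
      simp only [Pi.zero_apply, sub_nonneg]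
      exact Real.exp_le_one_iff.mpr (by nlinarith)
  have heq : ∫ x, (1 - Real.exp (-q * x)) ∂P = 1 - mLaplace P q := by
    rw [integral_sub (integrable_const 1) (exp_integrable P hP_pos hq.le)]
    simp [mLaplace]
  linarith [heq ▸ hpos]

lemma tail_bound (μ : Measure ℝ) [IsProbabilityMeasure μ] (hneg : μ (Iio 0) = 0)
    {q M : ℝ} (hq : 0 < q) (hM : 0 < M) :
    (μ (Ioi M)).toReal * (1 - Real.exp (-q * M)) ≤ 1 - ∫ x, Real.exp (-q * x) ∂μ := by
  have hint := exp_integrable μ hneg hq.le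
  have hint' : Integrable (fun x => 1 - Real.exp (-q * x)) μ := (integrable_const 1).sub hint
  have h1 : 1 - ∫ x, Real.exp (-q * x) ∂μ = ∫ x, (1 - Real.exp (-q * x)) ∂μ := by
    rw [integral_sub (integrable_const 1) hint]
    simp
  have h2 : ∫ x in Ioi M, (1 - Real.exp (-q * x)) ∂μ ≤ ∫ x, (1 - Real.exp (-q * x)) ∂μ := by
    apply setIntegral_le_integral hint'
    filter_upwards [ae_nonneg_of_Iio μ hneg] with x hx
    simp only [Pi.zero_apply, sub_nonneg]
    exact Real.exp_le_one_iff.mpr (by nlinarith)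
  have h3 : ∫ x in Ioi M, (1 - Real.exp (-q * M)) ∂μ
      ≤ ∫ x in Ioi M, (1 - Real.exp (-q * x)) ∂μ := by
    apply setIntegral_mono_on (integrable_const _).integrableOn hint'.integrableOn
      measurableSet_Ioi
    intro x hx
    have : Real.exp (-q * x) ≤ Real.exp (-q * M) := by
      apply Real.exp_le_exp.mpr
      simp only [mem_Ioi] at hx
      nlinarith
    linarith
  have h4 : ∫ x in Ioi M, (1 - Real.exp (-q * M)) ∂μ
      = (μ (Ioi M)).toReal * (1 - Real.exp (-q * M)) := by
    rw [setIntegral_const, smul_eq_mul]; rfl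
  linarith

section Main
variable (F0 P : MeasureTheory.Measure ℝ)
    [MeasureTheory.IsProbabilityMeasure F0]
    [MeasureTheory.IsProbabilityMeasure P]
    (hF0_pos : F0 (Set.Iio 0) = 0) (hP_pos : P (Set.Iio 0) = 0)
    (hP0 : P {0} < 1)
    (hA : StrictMonoOn (cumul (renewalMeasure F0 P)) (Set.Ici 0))
    (F : ℝ → MeasureTheory.ProbabilityMeasure ℝ)
    (hF_pos : ∀ t : ℝ, 0 ≤ t → (F t : MeasureTheory.Measure ℝ) (Set.Iio 0) = 0)
    (hF : ∀ t : ℝ, 0 ≤ t → ∀ q : ℝ, 0 < q →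
      (∫ x, Real.exp (-q * x) ∂(F t : MeasureTheory.Measure ℝ))
        = (1 - mLaplace P q)
          * ∫ s in Set.Ici t,
              Real.exp (-q * (genInv (cumul (renewalMeasure F0 P)) s
                - genInv (cumul (renewalMeasure F0 P)) t)))

local notation "τ" => genInv (cumul (renewalMeasure F0 P))

include hF0_pos hP_pos hA in
lemma tau_continuous : Continuous (genInv (cumul (renewalMeasure F0 P))) :=
  genInv_continuous (cumul_mono F0 P hA) (cumul_tendsto F0 P hF0_pos hP_pos hA) hA

include hF0_pos hP_pos hP0 hA hF in
lemma laplace_formula {t : ℝ} (ht : 0 ≤ t) {q : ℝ} (hq : 0 < q) :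
    (∫ x, Real.exp (-q * x) ∂(F t : MeasureTheory.Measure ℝ))
      = (1 - mLaplace P q) * (Real.exp (q * τ t)
          * ∫ s in Set.Ici t, Real.exp (-q * τ s)) := by
  rw [hF t ht q hq]
  congr 1
  have : ∀ s : ℝ, Real.exp (-q * (τ s - τ t)) = Real.exp (q * τ t) * Real.exp (-q * τ s) := by
    intro s
    rw [← Real.exp_add]
    ring_nf
  simp_rw [this]
  rw [MeasureTheory.integral_const_mul]

include hF0_pos hP_pos hP0 hA hF_pos hF in
lemma exp_tau_integrable {t : ℝ} (ht : 0 ≤ t) {q : ℝ} (hq : 0 < q) :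
    Integrable (fun s => Real.exp (-q * τ s)) (volume.restrict (Set.Ici t)) := by
  have hpos : 0 < ∫ x, Real.exp (-q * x) ∂(F t : MeasureTheory.Measure ℝ) :=
    exp_integral_pos _ (hF_pos t ht) hq.le
  rw [laplace_formula F0 P hF0_pos hP_pos hP0 hA F hF ht hq] at hpos
  have h1 := one_sub_laplace_pos P hP_pos hP0 hq
  have hJ : (∫ s in Set.Ici t, Real.exp (-q * τ s)) ≠ 0 := by
    intro h0
    rw [h0] at hpos
    simp at hpos
  by_contra hcon
  exact hJ (integral_undef hcon)

include hF0_pos hP_pos hP0 hA hF_pos hF in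
lemma laplace_tendsto {t₀ : ℝ} (ht₀ : 0 < t₀) {q : ℝ} (hq : 0 < q) :
    Tendsto (fun t => ∫ x, Real.exp (-q * x) ∂(F t : MeasureTheory.Measure ℝ))
      (nhdsWithin t₀ (Set.Ioi 0))
      (nhds (∫ x, Real.exp (-q * x) ∂(F t₀ : MeasureTheory.Measure ℝ))) := by
  set l := nhdsWithin t₀ (Set.Ioi (0:ℝ)) with hl
  have hτc : Continuous (genInv (cumul (renewalMeasure F0 P))) :=
    tau_continuous F0 P hF0_pos hP_pos hA
  set g : ℝ → ℝ := fun s => Real.exp (-q * τ s) with hg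
  have hgc : Continuous g := Real.continuous_exp.comp (continuous_const.mul hτc)
  have hgpos : ∀ s, 0 < g s := fun s => Real.exp_pos _
  set t₁ : ℝ := t₀ / 2 with ht₁
  have ht₁pos : 0 < t₁ := by positivity
  have hevgt : ∀ᶠ t in l, t₁ < t := by
    apply Filter.Eventually.filter_mono nhdsWithin_le_nhds
    exact eventually_gt_nhds (by linarith)
  -- convergence of J
  have hJ : Tendsto (fun t => ∫ s in Set.Ici t, g s) l (nhds (∫ s in Set.Ici t₀, g s)) := by
    have hrw : ∀ t : ℝ, (∫ s in Set.Ici t, g s) = ∫ s, (Set.Ici t).indicator g s := by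
      intro t
      rw [integral_indicator measurableSet_Ici]
    simp_rw [hrw]
    apply tendsto_integral_filter_of_dominated_convergence ((Set.Ici t₁).indicator g)
    · exact Eventually.of_forall fun t =>
        (hgc.aestronglyMeasurable).indicator measurableSet_Ici
    · filter_upwards [hevgt] with t ht
      apply Eventually.of_forall
      intro s
      by_cases hs : t ≤ s
      · rw [Set.indicator_of_mem (mem_Ici.mpr hs), Set.indicator_of_mem (mem_Ici.mpr (le_trans ht.le hs)),
          Real.norm_eq_abs, abs_of_pos (hgpos s)]
      · rw [Set.indicator_of_notMem (by simpa [Set.mem_Ici] using hs), norm_zero]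
        exact Set.indicator_nonneg (fun x _ => (hgpos x).le) s
    · rw [integrable_indicator_iff measurableSet_Ici]
      exact exp_tau_integrable F0 P hF0_pos hP_pos hP0 hA F hF_pos hF ht₁pos.le hq
    · have hae : ∀ᵐ s : ℝ, s ≠ t₀ := by
        rw [ae_iff]
        have : {s : ℝ | ¬ s ≠ t₀} = {t₀} := by ext x; simp
        rw [this]
        exact measure_singleton t₀
      filter_upwards [hae] with s hs
      rcases lt_or_gt_of_ne hs with h | h
      · have hev : ∀ᶠ t in l, (Set.Ici t).indicator g s = (Set.Ici t₀).indicator g s := by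
          apply Filter.Eventually.filter_mono nhdsWithin_le_nhds
          filter_upwards [eventually_gt_nhds h] with t ht'
          rw [Set.indicator_of_notMem (by simpa [Set.mem_Ici] using not_le.mpr ht'),
            Set.indicator_of_notMem (by simpa [Set.mem_Ici] using not_le.mpr h)]
        exact Tendsto.congr' (Filter.EventuallyEq.symm hev) tendsto_const_nhds
      · have hev : ∀ᶠ t in l, (Set.Ici t).indicator g s = (Set.Ici t₀).indicator g s := by
          apply Filter.Eventually.filter_mono nhdsWithin_le_nhds
          filter_upwards [eventually_lt_nhds h] with t ht'
          rw [Set.indicator_of_mem (mem_Ici.mpr (le_of_lt ht')), Set.indicator_of_mem (mem_Ici.mpr (le_of_lt h))]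
        exact Tendsto.congr' (Filter.EventuallyEq.symm hev) tendsto_const_nhds
  -- assemble
  have htau : Tendsto (fun t => Real.exp (q * τ t)) l (nhds (Real.exp (q * τ t₀))) := by
    have : Continuous fun t => Real.exp (q * τ t) :=
      Real.continuous_exp.comp (continuous_const.mul hτc)
    exact (this.tendsto t₀).mono_left nhdsWithin_le_nhds
  have hmain : Tendsto (fun t => (1 - mLaplace P q) * (Real.exp (q * τ t)
      * ∫ s in Set.Ici t, g s)) l (nhds ((1 - mLaplace P q) * (Real.exp (q * τ t₀)
      * ∫ s in Set.Ici t₀, g s))) := tendsto_const_nhds.mul (htau.mul hJ)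
  rw [laplace_formula F0 P hF0_pos hP_pos hP0 hA F hF ht₀.le hq]
  apply Tendsto.congr' ?_ hmain
  filter_upwards [self_mem_nhdsWithin] with t ht
  exact (laplace_formula F0 P hF0_pos hP_pos hP0 hA F hF (mem_Ioi.mp ht).le hq).symm

include hF0_pos hP_pos hP0 hA hF_pos hF in
lemma renewal_tight {t₀ : ℝ} (ht₀ : 0 < t₀) {δ : ℝ} (hδ : 0 < δ) :
    ∃ M : ℝ, 0 < M ∧ (((F t₀ : MeasureTheory.Measure ℝ) (Ioi M)).toReal < δ ∧
      ∀ᶠ t in nhdsWithin t₀ (Set.Ioi 0),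
        ((F t : MeasureTheory.Measure ℝ) (Ioi M)).toReal < δ) := by
  have hq0 : Tendsto (fun n : ℕ => ∫ x, Real.exp (-(1/((n:ℝ)+1)) * x) ∂(F t₀ : Measure ℝ))
      atTop (𝓝 1) := by
    have hmeas : ∀ n : ℕ, AEStronglyMeasurable
        (fun x : ℝ => Real.exp (-(1/((n:ℝ)+1)) * x)) (F t₀ : Measure ℝ) :=
      fun n => (Real.continuous_exp.comp
        (continuous_const.mul continuous_id)).aestronglyMeasurable
    have hbd : ∀ n : ℕ, ∀ᵐ x ∂(F t₀ : Measure ℝ),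
        ‖Real.exp (-(1/((n:ℝ)+1)) * x)‖ ≤ (fun _ : ℝ => (1:ℝ)) x := by
      intro n
      filter_upwards [ae_nonneg_of_Iio _ (hF_pos t₀ ht₀.le)] with x hx
      rw [Real.norm_eq_abs, abs_of_pos (Real.exp_pos _)]
      apply Real.exp_le_one_iff.mpr
      have : (0:ℝ) < (n:ℝ) + 1 := by positivity
      have h2 : 0 ≤ (1/((n:ℝ)+1)) * x := by positivity
      linarith
    have hlimpt : ∀ᵐ x ∂(F t₀ : Measure ℝ), Tendsto
        (fun n : ℕ => Real.exp (-(1/((n:ℝ)+1)) * x)) atTop (𝓝 ((fun _ : ℝ => (1:ℝ)) x)) := by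
      apply Eventually.of_forall
      intro x
      have h2 : Tendsto (fun n : ℕ => -(1/((n:ℝ)+1)) * x) atTop (𝓝 0) := by
        have h3 : Tendsto (fun n : ℕ => 1/((n:ℝ)+1)) atTop (𝓝 0) :=
          tendsto_one_div_add_atTop_nhds_zero_nat
        have := (h3.neg).mul_const x
        simpa using this
      have := (Real.continuous_exp.tendsto 0).comp h2
      simpa [Function.comp_def] using this
    have hlim := tendsto_integral_of_dominated_convergence (μ := (F t₀ : Measure ℝ))
      (fun _ : ℝ => (1:ℝ)) hmeas (integrable_const 1) hbd hlimpt
    simpa using hlim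
  obtain ⟨n, hn⟩ := (hq0.eventually_const_lt (by linarith : (1:ℝ) - δ/8 < 1)).exists
  set q : ℝ := 1/((n:ℝ)+1) with hqdef
  have hqpos : 0 < q := by positivity
  set M : ℝ := max (1/q) 1 with hMdef
  have hMpos : (0:ℝ) < M := lt_of_lt_of_le one_pos (le_max_right _ _)
  have hexpM : Real.exp (-q * M) ≤ 1/2 := by
    have h1 : (1:ℝ) ≤ q * M := by
      have : q * (1/q) ≤ q * M := by
        apply mul_le_mul_of_nonneg_left (le_max_left _ _) hqpos.le
      rwa [mul_one_div, div_self hqpos.ne'] at this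
    have h2 : Real.exp (-q * M) ≤ Real.exp (-1) := Real.exp_le_exp.mpr (by linarith)
    have h3 : Real.exp (-1) ≤ 1/2 := by
      rw [Real.exp_neg]
      have := Real.add_one_le_exp 1
      rw [inv_le_comm₀ (Real.exp_pos 1) (by norm_num)]
      · linarith
    linarith
  have key : ∀ t : ℝ, 0 ≤ t →
      ((F t : Measure ℝ) (Ioi M)).toReal ≤ 2 * (1 - ∫ x, Real.exp (-q * x) ∂(F t : Measure ℝ)) := by
    intro t ht
    have hb := tail_bound (F t : Measure ℝ) (hF_pos t ht) hqpos hMpos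
    have hnn : (0:ℝ) ≤ ((F t : Measure ℝ) (Ioi M)).toReal := ENNReal.toReal_nonneg
    nlinarith
  refine ⟨M, hMpos, ?_, ?_⟩
  · have := key t₀ ht₀.le
    linarith
  · have hev := (laplace_tendsto F0 P hF0_pos hP_pos hP0 hA F hF_pos hF ht₀
      hqpos).eventually_const_lt (by linarith : (1:ℝ) - δ/4 < ∫ x, Real.exp (-q * x) ∂(F t₀ : Measure ℝ))
    filter_upwards [hev, self_mem_nhdsWithin] with t h1 h2
    have := key t (le_of_lt (mem_Ioi.mp h2))
    linarith

include hF0_pos hP_pos hP0 hA hF_pos hF in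
lemma exp_k_tendsto {t₀ : ℝ} (ht₀ : 0 < t₀) (k : ℕ) :
    Tendsto (fun t => ∫ x, Real.exp (-(k:ℝ) * x) ∂(F t : MeasureTheory.Measure ℝ))
      (nhdsWithin t₀ (Set.Ioi 0))
      (nhds (∫ x, Real.exp (-(k:ℝ) * x) ∂(F t₀ : MeasureTheory.Measure ℝ))) := by
  cases k with
  | zero =>
    simp only [Nat.cast_zero, neg_zero, zero_mul, Real.exp_zero]
    simp only [integral_const, measure_univ, probReal_univ, smul_eq_mul, one_mul]
    exact tendsto_const_nhds
  | succ m =>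
    have h := laplace_tendsto F0 P hF0_pos hP_pos hP0 hA F hF_pos hF ht₀
      (by positivity : (0:ℝ) < ((m:ℝ) + 1))
    simp only [Nat.cast_succ]
    exact h

include hF0_pos hP_pos hP0 hA hF_pos hF in
lemma poly_tendsto (Q : Polynomial ℝ) {t₀ : ℝ} (ht₀ : 0 < t₀) :
    Tendsto (fun t => ∫ x, Q.eval (Real.exp (-x)) ∂(F t : MeasureTheory.Measure ℝ))
      (nhdsWithin t₀ (Set.Ioi 0))
      (nhds (∫ x, Q.eval (Real.exp (-x)) ∂(F t₀ : MeasureTheory.Measure ℝ))) := by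
  have hrw : ∀ (μ : Measure ℝ) [IsProbabilityMeasure μ], μ (Iio 0) = 0 →
      ∫ x, Q.eval (Real.exp (-x)) ∂μ
        = ∑ k ∈ Finset.range (Q.natDegree + 1), Q.coeff k * ∫ x, Real.exp (-(k:ℝ) * x) ∂μ := by
    intro μ _ hneg
    have hpt : ∀ x : ℝ, Q.eval (Real.exp (-x))
        = ∑ k ∈ Finset.range (Q.natDegree + 1), Q.coeff k * Real.exp (-(k:ℝ) * x) := by
      intro x
      rw [Polynomial.eval_eq_sum_range]
      apply Finset.sum_congr rfl
      intro k _
      congr 1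
      rw [← Real.exp_nat_mul]
      congr 1
      ring
    simp_rw [hpt]
    rw [integral_finset_sum]
    · apply Finset.sum_congr rfl
      intro k _
      exact integral_const_mul _ _
    · intro k _
      exact ((exp_integrable μ hneg (by positivity : (0:ℝ) ≤ (k:ℝ))).const_mul _)
  have hrw2 : ∀ t : ℝ, 0 ≤ t → ∫ x, Q.eval (Real.exp (-x)) ∂(F t : Measure ℝ)
      = ∑ k ∈ Finset.range (Q.natDegree + 1),
          Q.coeff k * ∫ x, Real.exp (-(k:ℝ) * x) ∂(F t : Measure ℝ) := by
    intro t ht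
    exact hrw _ (hF_pos t ht)
  rw [hrw2 t₀ ht₀.le]
  apply Tendsto.congr' ?_ (tendsto_finset_sum _ (fun k _ =>
    (exp_k_tendsto F0 P hF0_pos hP_pos hP0 hA F hF_pos hF ht₀ k).const_mul (Q.coeff k)))
  filter_upwards [self_mem_nhdsWithin] with t ht
  exact (hrw2 t (le_of_lt (mem_Ioi.mp ht))).symm

end Main

/-- For probability measures `F0, P` on `ℝ₊` with `P({0}) < 1`
and with the cumulative renewal function `A(·)` strictly increasing on `[0,∞)`,
the renewal-scaled solution `t ↦ F_t` (the probability measure with Laplace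
transform `F̂_t(q) = (1 − P̂(q)) ∫_t^∞ e^{-q(τ(s) − τ(t))} ds`, `τ = A†`) is
continuous for `t > 0` into the probability measures with the weak topology. -/
theorem stmt13 (F0 P : MeasureTheory.Measure ℝ)
    (hF0 : MeasureTheory.IsProbabilityMeasure F0)
    (hP : MeasureTheory.IsProbabilityMeasure P)
    (hF0_pos : F0 (Set.Iio 0) = 0) (hP_pos : P (Set.Iio 0) = 0)
    (hP0 : P {0} < 1)
    (hA : StrictMonoOn (cumul (renewalMeasure F0 P)) (Set.Ici 0))
    (F : ℝ → MeasureTheory.ProbabilityMeasure ℝ)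
    (hF_pos : ∀ t : ℝ, 0 ≤ t → (F t : MeasureTheory.Measure ℝ) (Set.Iio 0) = 0)
    (hF : ∀ t : ℝ, 0 ≤ t → ∀ q : ℝ, 0 < q →
      (∫ x, Real.exp (-q * x) ∂(F t : MeasureTheory.Measure ℝ))
        = (1 - mLaplace P q)
          * ∫ s in Set.Ici t,
              Real.exp (-q * (genInv (cumul (renewalMeasure F0 P)) s
                - genInv (cumul (renewalMeasure F0 P)) t))) :
    ContinuousOn F (Set.Ioi 0) := by
  haveI := hF0
  haveI := hP
  intro t₀ ht₀mem
  have ht₀ : (0:ℝ) < t₀ := ht₀mem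
  unfold ContinuousWithinAt
  apply MeasureTheory.ProbabilityMeasure.tendsto_iff_forall_integral_tendsto.mpr
  intro f
  rw [Metric.tendsto_nhds]
  intro ε hε
  set B : ℝ := ‖f‖ + 1 with hBdef
  have hBpos : (0:ℝ) < B := by positivity
  have hfb : ∀ x : ℝ, |f x| ≤ ‖f‖ := fun x => f.norm_coe_le_norm x
  obtain ⟨M, hMpos, htight0, htightev⟩ :=
    renewal_tight F0 P hF0_pos hP_pos hP0 hA F hF_pos hF ht₀ (show 0 < ε/(6*B) by positivity)
  -- cutoff function
  set χ : ℝ → ℝ := fun x => min 1 (max 0 (M + 1 - x)) with hχdef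
  have hχcont : Continuous χ :=
    continuous_const.min (continuous_const.max (continuous_const.sub continuous_id))
  have hχ0 : ∀ x, 0 ≤ χ x := fun x => le_min zero_le_one (le_max_left 0 _)
  have hχ1 : ∀ x, χ x ≤ 1 := fun x => min_le_left _ _
  have hχeq1 : ∀ x : ℝ, x ≤ M → χ x = 1 :=
    fun x hx => min_eq_left (le_max_of_le_right (by linarith))
  have hχeq0 : ∀ x : ℝ, M + 1 ≤ x → χ x = 0 := by
    intro x hx
    show min 1 (max 0 (M + 1 - x)) = 0
    rw [max_eq_left (by linarith), min_eq_right zero_le_one]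
  set fM : ℝ → ℝ := fun x => f x * χ x with hfMdef
  have hfMcont : Continuous fM := f.continuous.mul hχcont
  have hfMb : ∀ x, |fM x| ≤ ‖f‖ := by
    intro x
    rw [abs_mul]
    calc |f x| * |χ x| ≤ ‖f‖ * 1 := by
          apply mul_le_mul (hfb x) ?_ (abs_nonneg _) (norm_nonneg f)
          rw [abs_of_nonneg (hχ0 x)]
          exact hχ1 x
      _ = ‖f‖ := mul_one _
  -- the compactified function on [0,1]
  set c : ℝ := Real.exp (-(M+2)) with hcdef
  have hcpos : 0 < c := Real.exp_pos _
  have hlogcont : Continuous fun y : ℝ => -Real.log (max y c) := by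
    apply Continuous.neg
    exact (continuous_id.max continuous_const).log
      (fun y => ne_of_gt (lt_max_of_lt_right hcpos))
  set G : C(Set.Icc (0:ℝ) 1, ℝ) :=
    ⟨fun y => fM (-Real.log (max (y:ℝ) c)),
      (hfMcont.comp hlogcont).comp continuous_subtype_val⟩ with hGdef
  have hmemIcc : ∀ x : ℝ, 0 ≤ x → Real.exp (-x) ∈ Set.Icc (0:ℝ) 1 :=
    fun x hx => ⟨(Real.exp_pos _).le, Real.exp_le_one_iff.mpr (by linarith)⟩
  have hkey : ∀ x : ℝ, (hx : 0 ≤ x) → fM x = G ⟨Real.exp (-x), hmemIcc x hx⟩ := by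
    intro x hx
    show fM x = fM (-Real.log (max (Real.exp (-x)) c))
    rcases le_or_gt x (M+2) with h | h
    · rw [max_eq_left (by rw [hcdef]; exact Real.exp_le_exp.mpr (by linarith)),
        Real.log_exp, neg_neg]
    · rw [max_eq_right (by rw [hcdef]; exact Real.exp_le_exp.mpr (by linarith)),
        hcdef, Real.log_exp, neg_neg]
      have h1 : fM x = 0 := by
        show f x * χ x = 0
        rw [hχeq0 x (by linarith), mul_zero]
      have h2 : fM (M+2) = 0 := by
        show f (M+2) * χ (M+2) = 0
        rw [hχeq0 (M+2) (by linarith), mul_zero]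
      rw [h1, h2]
  -- Weierstrass approximation
  obtain ⟨Q, hQ⟩ := exists_polynomial_near_continuousMap 0 1 G (ε/8) (by positivity)
  have hQpt : ∀ x : ℝ, 0 ≤ x → |fM x - Q.eval (Real.exp (-x))| ≤ ε/8 := by
    intro x hx
    have h1 := ContinuousMap.norm_coe_le_norm
      (Q.toContinuousMapOn (Set.Icc (0:ℝ) 1) - G) ⟨Real.exp (-x), hmemIcc x hx⟩
    have hG : G ⟨Real.exp (-x), hmemIcc x hx⟩ = fM x := (hkey x hx).symm
    have hQapp : (Q.toContinuousMapOn (Set.Icc (0:ℝ) 1)) ⟨Real.exp (-x), hmemIcc x hx⟩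
        = Q.eval (Real.exp (-x)) := by
      simp [Polynomial.toContinuousMapOn_apply]
    have h2 : ‖(Q.toContinuousMapOn (Set.Icc (0:ℝ) 1) - G) ⟨Real.exp (-x), hmemIcc x hx⟩‖
        = |Q.eval (Real.exp (-x)) - fM x| := by
      rw [ContinuousMap.sub_apply, hQapp, hG, Real.norm_eq_abs]
    rw [h2] at h1
    rw [abs_sub_comm]
    linarith
  -- integrability
  have hQcont : Continuous fun x : ℝ => Q.eval (Real.exp (-x)) :=
    Q.continuous.comp (Real.continuous_exp.comp continuous_neg)
  have hμint : ∀ t : ℝ, 0 ≤ t →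
      Integrable (fun x => Q.eval (Real.exp (-x))) (F t : MeasureTheory.Measure ℝ) := by
    intro t ht
    refine Integrable.mono' (integrable_const (‖f‖ + ε/8)) hQcont.aestronglyMeasurable ?_
    filter_upwards [ae_nonneg_of_Iio _ (hF_pos t ht)] with x hx
    have h1 := hQpt x hx
    have h2 := hfMb x
    rw [Real.norm_eq_abs]
    have h3 : |Q.eval (Real.exp (-x))| ≤ |fM x - Q.eval (Real.exp (-x))| + |fM x| := by
      have habs := abs_add_le (Q.eval (Real.exp (-x)) - fM x) (fM x)
      rw [sub_add_cancel] at habs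
      rw [abs_sub_comm (fM x) (Q.eval (Real.exp (-x)))]
      exact habs
    linarith
  have hfint : ∀ t : ℝ, Integrable (⇑f) (F t : MeasureTheory.Measure ℝ) :=
    fun t => f.integrable _
  have hfMint : ∀ t : ℝ, Integrable fM (F t : MeasureTheory.Measure ℝ) := by
    intro t
    refine Integrable.mono' (integrable_const ‖f‖) hfMcont.aestronglyMeasurable ?_
    apply Eventually.of_forall
    intro x
    rw [Real.norm_eq_abs]
    exact hfMb x
  -- Estimate 1 : cutoff error
  have hEst1 : ∀ t : ℝ, 0 ≤ t →
      |(∫ x, f x ∂(F t : MeasureTheory.Measure ℝ))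
        - ∫ x, fM x ∂(F t : MeasureTheory.Measure ℝ)|
      ≤ ‖f‖ * ((F t : MeasureTheory.Measure ℝ) (Set.Ioi M)).toReal := by
    intro t ht
    rw [← integral_sub (hfint t) (hfMint t)]
    have hptw : ∀ x : ℝ, |f x - fM x| ≤ (Set.Ioi M).indicator (fun _ => ‖f‖) x := by
      intro x
      rcases le_or_gt x M with h | h
      · have : fM x = f x := by
          show f x * χ x = f x
          rw [hχeq1 x h, mul_one]
        rw [this, sub_self, abs_zero]
        exact Set.indicator_nonneg (fun _ _ => norm_nonneg f) x
      · rw [Set.indicator_of_mem (mem_Ioi.mpr h)]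
        have heq : f x - fM x = f x * (1 - χ x) := by
          show f x - f x * χ x = f x * (1 - χ x)
          ring
        rw [heq, abs_mul, abs_of_nonneg (by linarith [hχ1 x] : (0:ℝ) ≤ 1 - χ x)]
        calc |f x| * (1 - χ x) ≤ ‖f‖ * 1 :=
              mul_le_mul (hfb x) (by linarith [hχ0 x]) (by linarith [hχ1 x]) (norm_nonneg f)
          _ = ‖f‖ := mul_one _
    have h5 : |∫ x, (f x - fM x) ∂(F t : MeasureTheory.Measure ℝ)|
        ≤ ∫ x, |f x - fM x| ∂(F t : MeasureTheory.Measure ℝ) := by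
      have := norm_integral_le_integral_norm (μ := (F t : MeasureTheory.Measure ℝ))
        (f := fun x => f x - fM x)
      simpa [Real.norm_eq_abs] using this
    have h6 : ∫ x, |f x - fM x| ∂(F t : MeasureTheory.Measure ℝ)
        ≤ ∫ x, (Set.Ioi M).indicator (fun _ => ‖f‖) x ∂(F t : MeasureTheory.Measure ℝ) := by
      apply integral_mono ((hfint t).sub (hfMint t)).abs
        ((integrable_const ‖f‖).indicator measurableSet_Ioi) hptw
    have h7 : ∫ x, (Set.Ioi M).indicator (fun _ => ‖f‖) x ∂(F t : MeasureTheory.Measure ℝ)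
        = ((F t : MeasureTheory.Measure ℝ) (Set.Ioi M)).toReal * ‖f‖ := by
      rw [integral_indicator_const _ measurableSet_Ioi, smul_eq_mul]; rfl
    rw [mul_comm] at h7
    linarith
  -- Estimate 2 : Weierstrass error
  have hEst2 : ∀ t : ℝ, 0 ≤ t →
      |(∫ x, fM x ∂(F t : MeasureTheory.Measure ℝ))
        - ∫ x, Q.eval (Real.exp (-x)) ∂(F t : MeasureTheory.Measure ℝ)| ≤ ε/8 := by
    intro t ht
    rw [← integral_sub (hfMint t) (hμint t ht)]
    have h1 : ‖∫ x, (fM x - Q.eval (Real.exp (-x))) ∂(F t : MeasureTheory.Measure ℝ)‖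
        ≤ (ε/8) * ((F t : MeasureTheory.Measure ℝ) Set.univ).toReal := by
      apply norm_integral_le_of_norm_le_const
      filter_upwards [ae_nonneg_of_Iio _ (hF_pos t ht)] with x hx
      rw [Real.norm_eq_abs]
      exact hQpt x hx
    rw [measure_univ] at h1
    simp only [ENNReal.toReal_one, mul_one] at h1
    rw [← Real.norm_eq_abs]
    exact h1
  -- Estimate 3 : convergence of polynomial integrals
  have hEst3 := poly_tendsto F0 P hF0_pos hP_pos hP0 hA F hF_pos hF Q ht₀
  rw [Metric.tendsto_nhds] at hEst3
  have hEst3' := hEst3 (ε/8) (by positivity)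
  -- combine
  filter_upwards [htightev, hEst3', self_mem_nhdsWithin] with t h1 h3 hmem
  have ht : (0:ℝ) ≤ t := le_of_lt (mem_Ioi.mp hmem)
  rw [Real.dist_eq] at h3 ⊢
  have e1 := hEst1 t ht
  have e1' := hEst1 t₀ ht₀.le
  have e2 := hEst2 t ht
  have e2' := hEst2 t₀ ht₀.le
  have hnormB : ‖f‖ ≤ B := by rw [hBdef]; linarith
  have tb : ‖f‖ * ((F t : MeasureTheory.Measure ℝ) (Set.Ioi M)).toReal ≤ ε/6 := by
    have hmm := mul_le_mul hnormB (le_of_lt h1) ENNReal.toReal_nonneg hBpos.le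
    calc ‖f‖ * ((F t : MeasureTheory.Measure ℝ) (Set.Ioi M)).toReal ≤ B * (ε/(6*B)) := hmm
      _ = ε/6 := by field_simp [hBpos.ne']
  have tb' : ‖f‖ * ((F t₀ : MeasureTheory.Measure ℝ) (Set.Ioi M)).toReal ≤ ε/6 := by
    have hmm := mul_le_mul hnormB (le_of_lt htight0) ENNReal.toReal_nonneg hBpos.le
    calc ‖f‖ * ((F t₀ : MeasureTheory.Measure ℝ) (Set.Ioi M)).toReal ≤ B * (ε/(6*B)) := hmm
      _ = ε/6 := by field_simp [hBpos.ne']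
  set a1 : ℝ := ∫ x, f x ∂(F t : MeasureTheory.Measure ℝ)
  set a2 : ℝ := ∫ x, fM x ∂(F t : MeasureTheory.Measure ℝ)
  set a3 : ℝ := ∫ x, Q.eval (Real.exp (-x)) ∂(F t : MeasureTheory.Measure ℝ)
  set b3 : ℝ := ∫ x, Q.eval (Real.exp (-x)) ∂(F t₀ : MeasureTheory.Measure ℝ)
  set b2 : ℝ := ∫ x, fM x ∂(F t₀ : MeasureTheory.Measure ℝ)
  set b1 : ℝ := ∫ x, f x ∂(F t₀ : MeasureTheory.Measure ℝ)
  have tri : |a1 - b1| ≤ |a1 - a2| + |a2 - a3| + |a3 - b3| + |b3 - b2| + |b2 - b1| := by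
    have t1 := abs_sub_le a1 a2 b1
    have t2 := abs_sub_le a2 a3 b1
    have t3 := abs_sub_le a3 b3 b1
    have t4 := abs_sub_le b3 b2 b1
    linarith
  have hb3b2 : |b3 - b2| = |b2 - b3| := abs_sub_comm _ _
  have hb2b1 : |b2 - b1| = |b1 - b2| := abs_sub_comm _ _
  rw [hb3b2, hb2b1] at tri
  calc |a1 - b1| ≤ |a1 - a2| + |a2 - a3| + |a3 - b3| + |b2 - b3| + |b1 - b2| := tri
    _ < ε := by linarith
end
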